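/- arXiv:2104.10755 — 6 statements merged into one kernel-verified Lean document; each statement's English description precedes it below -/
import Mathlib

section
/- Let n ≥ 2 be an integer and let S be a nonempty subset of {1, …, ⌊n/2⌋}. If the circulant graph Circ(n,S) is a nut graph, then n is even, P(ω^{n/2}) = 0, and P(ω^j) ≠ 0 for all j ∈ {0, 1, …, n−1} with j ≠ n/2. -/
open Finset Polynomial

/-- The circulant graph `Circ(n, S)` on the vertex set `Fin n` (identified with `ℤ/nℤ`):
distinct vertices `i` and `j` are adjacent iff `i - j ≡ ±s (mod n)` for some `s ∈ S`. -/
def circ (n : ℕ) (S : Finset ℕ) : SimpleGraph (Fin n) where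
  Adj i j := i ≠ j ∧ ∃ s ∈ S,
      ((i.val : ZMod n) - (j.val : ZMod n) = (s : ZMod n) ∨
        (j.val : ZMod n) - (i.val : ZMod n) = (s : ZMod n))
  symm := by
    refine ⟨?_⟩
    rintro i j ⟨hij, s, hs, h⟩
    exact ⟨hij.symm, s, hs, h.symm⟩
  loopless := by
    refine ⟨?_⟩
    rintro i ⟨h, -⟩
    exact h rfl

open Classical in
/-- The adjacency matrix (over `ℚ`) of a graph on `Fin n`. -/
noncomputable def adjMat {n : ℕ} (G : SimpleGraph (Fin n)) :
    Matrix (Fin n) (Fin n) ℚ :=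
  Matrix.of fun i j => if G.Adj i j then 1 else 0

/-- A graph on at least two vertices is a nut graph if the kernel of its rational
adjacency matrix is one-dimensional, spanned by a vector having no zero entries. -/
def IsNutGraph {n : ℕ} (G : SimpleGraph (Fin n)) : Prop :=
  2 ≤ n ∧ ∃ v : Fin n → ℚ, (∀ i, v i ≠ 0) ∧ (adjMat G).mulVec v = 0 ∧
    ∀ w : Fin n → ℚ, (adjMat G).mulVec w = 0 → ∃ c : ℚ, w = c • v

open Classical in
/-- The degree of a vertex of a graph on `Fin n`. -/
noncomputable def degOf {n : ℕ} (G : SimpleGraph (Fin n)) (v : Fin n) : ℕ :=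
  (Finset.univ.filter fun w => G.Adj v w).card

/-- A graph is `d`-regular if every vertex has degree `d`. -/
def IsRegularGraph {n : ℕ} (G : SimpleGraph (Fin n)) (d : ℕ) : Prop :=
  ∀ v, degOf G v = d

/-- The eigenvalue polynomial `P(y) = ∑_{k=1}^{n-1} a_k y^k`, where `a_k = 1` iff
`k ∈ S` or `n - k ∈ S`. -/
noncomputable def Pval (n : ℕ) (S : Finset ℕ) (y : ℂ) : ℂ :=
  ∑ k ∈ Finset.Ico 1 n, (if k ∈ S ∨ n - k ∈ S then (1 : ℂ) else 0) * y ^ k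

/-- `ω = e^{2πi/n}`. -/
noncomputable def omegaC (n : ℕ) : ℂ :=
  Complex.exp (2 * (Real.pi : ℂ) * Complex.I / (n : ℂ))

/-- The generator set `S_t = {1, …, 2t+1} \ {t}`. -/
def St (t : ℕ) : Finset ℕ := (Finset.Icc 1 (2 * t + 1)).erase t

/-- The polynomial `Q_t(y) = y^{4t+3} − y^{3t+2} + y^{3t+1} − y^{2t+2} + y^{2t+1}
− y^{t+2} + y^{t+1} − 1` over `ℤ`. -/
noncomputable def Qt (t : ℕ) : Polynomial ℤ :=
  X ^ (4 * t + 3) - X ^ (3 * t + 2) + X ^ (3 * t + 1) - X ^ (2 * t + 2)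
    + X ^ (2 * t + 1) - X ^ (t + 2) + X ^ (t + 1) - 1

section AuxLemmas

/-- Linear-algebra lemma: if every rational kernel vector of `A` is a multiple of `v`,
then any complex kernel vector `u` satisfies the proportionality relation with `v`. -/
lemma ratio_lemma {n : ℕ} (A : Matrix (Fin n) (Fin n) ℚ) (v : Fin n → ℚ)
    (huniq : ∀ w : Fin n → ℚ, A.mulVec w = 0 → ∃ c : ℚ, w = c • v)
    (u : Fin n → ℂ) (hu : ∀ i, ∑ k, (A i k : ℂ) * u k = 0)
    (k l : Fin n) : u k * (v l : ℂ) = u l * (v k : ℂ) := by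
  classical
  let b := Module.Basis.ofVectorSpace ℚ ℂ
  have key : ∀ β, ∃ c : ℚ, (fun k => b.repr (u k) β) = c • v := by
    intro β
    refine huniq _ ?_
    funext i
    let L : ℂ →ₗ[ℚ] ℚ := (Finsupp.lapply β) ∘ₗ b.repr.toLinearMap
    have h1 : ∑ k, (A i k) • (u k) = 0 := by
      have := hu i
      simpa [Rat.smul_def] using this
    have h2 : ∑ k, (A i k) * L (u k) = 0 := by
      have := congrArg L h1
      simpa [map_sum, map_smul, smul_eq_mul] using this
    simpa [Matrix.mulVec, dotProduct, L, Pi.zero_apply] using h2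
  have main : (v l : ℚ) • u k = (v k : ℚ) • u l := by
    apply b.repr.injective
    ext β
    obtain ⟨c, hc⟩ := key β
    have h1 := congrFun hc k
    have h2 := congrFun hc l
    simp only [Pi.smul_apply, smul_eq_mul] at h1 h2
    simp only [map_smul, Finsupp.smul_apply, smul_eq_mul, h1, h2]
    ring
  rw [Rat.smul_def, Rat.smul_def] at main
  rw [mul_comm (u k), mul_comm (u l)]
  exact main

end AuxLemmas
section AuxLemmas2

lemma circ_adj_iff (n : ℕ) (hn : 2 ≤ n) (S : Finset ℕ) (hSsub : S ⊆ Finset.Icc 1 (n / 2))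
    (i k : Fin n) :
    (circ n S).Adj i k ↔
      ((((k.val : ZMod n) - (i.val : ZMod n)).val ∈ S) ∨
        (n - ((k.val : ZMod n) - (i.val : ZMod n)).val ∈ S)) := by
  haveI : NeZero n := ⟨by omega⟩
  set m : ZMod n := (k.val : ZMod n) - (i.val : ZMod n) with hm
  have hmlt : m.val < n := ZMod.val_lt m
  constructor
  · rintro ⟨hik, s, hs, h⟩
    obtain ⟨hs1, hs2⟩ := Finset.mem_Icc.mp (hSsub hs)
    have hslt : s < n := by omega
    have hsval : ((s : ℕ) : ZMod n).val = s := ZMod.val_cast_of_lt hslt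
    have hsne : ((s : ℕ) : ZMod n) ≠ 0 := by
      intro h0
      rw [h0, ZMod.val_zero] at hsval; omega
    rcases h with h | h
    · -- i - k = s : m = -s
      right
      have hmneg : m = -((s : ℕ) : ZMod n) := by rw [hm]; linear_combination -h
      have : m.val = n - s := by
        rw [hmneg, ZMod.neg_val, if_neg hsne, hsval]
      rw [this]
      have : n - (n - s) = s := by omega
      rwa [this]
    · -- k - i = s : m = s
      left
      have hmeq : m = ((s : ℕ) : ZMod n) := by rw [hm]; linear_combination h
      rw [hmeq, hsval]; exact hs
  · intro h
    have hmne : m ≠ 0 := by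
      intro h0
      rw [h0, ZMod.val_zero] at h
      rcases h with h | h
      · have := Finset.mem_Icc.mp (hSsub h); omega
      · have := Finset.mem_Icc.mp (hSsub (by simpa using h)); omega
    have hik : i ≠ k := by
      intro hik; apply hmne; rw [hm, hik, sub_self]
    rcases h with h | h
    · exact ⟨hik, m.val, h, Or.inr (by rw [ZMod.natCast_val, ZMod.cast_id])⟩
    · refine ⟨hik, n - m.val, h, Or.inl ?_⟩
      have hmv1 : 1 ≤ m.val := by
        rcases Nat.eq_zero_or_pos m.val with h0 | h1
        · exact absurd ((ZMod.val_eq_zero m).mp h0) hmne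
        · exact h1
      have : ((n - m.val : ℕ) : ZMod n) = -m := by
        push_cast [Nat.cast_sub (le_of_lt hmlt)]
        simp
      rw [this, hm]; ring
  
end AuxLemmas2
section AuxLemmas3

lemma eigen_sum (n : ℕ) (hn : 2 ≤ n) (S : Finset ℕ) (hSsub : S ⊆ Finset.Icc 1 (n / 2))
    (z : ℂ) (hz : z ^ n = 1) (i : Fin n) :
    ∑ k : Fin n, ((adjMat (circ n S)) i k : ℂ) * z ^ (k.val) =
      Pval n S z * z ^ (i.val) := by
  classical
  haveI : NeZero n := ⟨by omega⟩
  have hA : ∀ t : Fin n, ((adjMat (circ n S)) i (i + t) : ℚ)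
      = if t.val ∈ S ∨ n - t.val ∈ S then 1 else 0 := by
    intro t
    have hcond : (circ n S).Adj i (i + t) ↔ (t.val ∈ S ∨ n - t.val ∈ S) := by
      rw [circ_adj_iff n hn S hSsub]
      have h1 : (((i + t).val : ZMod n) - (i.val : ZMod n)) = (t.val : ZMod n) := by
        rw [Fin.val_add, ZMod.natCast_mod]
        push_cast
        ring
      rw [h1, ZMod.val_cast_of_lt t.isLt]
    rw [adjMat]
    simp only [Matrix.of_apply, hcond]
  have hpow : ∀ t : Fin n, z ^ ((i + t).val) = z ^ (i.val) * z ^ (t.val) := by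
    intro t
    rw [Fin.val_add, ← pow_eq_pow_mod _ hz, pow_add]
  calc ∑ k : Fin n, ((adjMat (circ n S)) i k : ℂ) * z ^ (k.val)
      = ∑ t : Fin n, ((adjMat (circ n S)) i (i + t) : ℂ) * z ^ ((i + t).val) :=
        (Equiv.sum_comp (Equiv.addLeft i)
          fun k => ((adjMat (circ n S)) i k : ℂ) * z ^ (k.val)).symm
    _ = ∑ t : Fin n, (if t.val ∈ S ∨ n - t.val ∈ S then (1:ℂ) else 0) * z ^ (t.val) * z ^ (i.val) := by
        refine Finset.sum_congr rfl fun t _ => ?_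
        rw [hA, hpow]
        split_ifs <;> push_cast <;> ring
    _ = (∑ t : Fin n, (if t.val ∈ S ∨ n - t.val ∈ S then (1:ℂ) else 0) * z ^ (t.val)) * z ^ (i.val) := by
        rw [Finset.sum_mul]
    _ = Pval n S z * z ^ (i.val) := by
        congr 1
        rw [Fin.sum_univ_eq_sum_range (fun k => (if k ∈ S ∨ n - k ∈ S then (1:ℂ) else 0) * z ^ k)]
        rw [Pval]
        refine (Finset.sum_subset ?_ ?_).symm
        · intro x hx; simp only [Finset.mem_Ico] at hx; exact Finset.mem_range.mpr hx.2
        · intro x hx hnx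
          simp only [Finset.mem_range] at hx
          simp only [Finset.mem_Ico, not_and, not_lt] at hnx
          have hx0 : x = 0 := by omega
          subst hx0
          have h1 : (0:ℕ) ∉ S := fun h => by have := Finset.mem_Icc.mp (hSsub h); omega
          have h2 : n ∉ S := fun h => by have := Finset.mem_Icc.mp (hSsub h); omega
          simp [h1, h2]

end AuxLemmas3
section AuxLemmas4

lemma Pval_one_ne (n : ℕ) (hn : 2 ≤ n) (S : Finset ℕ) (hS : S.Nonempty)
    (hSsub : S ⊆ Finset.Icc 1 (n / 2)) : Pval n S 1 ≠ 0 := by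
  classical
  obtain ⟨s, hs⟩ := hS
  obtain ⟨hs1, hs2⟩ := Finset.mem_Icc.mp (hSsub hs)
  rw [Pval]
  simp only [one_pow, mul_one]
  rw [Finset.sum_boole]
  rw [Nat.cast_ne_zero]
  simp only [← Nat.pos_iff_ne_zero]
  exact Finset.card_pos.mpr ⟨s, Finset.mem_filter.mpr ⟨Finset.mem_Ico.mpr ⟨hs1, by omega⟩, Or.inl hs⟩⟩

lemma det_prod (n : ℕ) (hn : 2 ≤ n) (S : Finset ℕ) (hSsub : S ⊆ Finset.Icc 1 (n / 2)) :
    ((adjMat (circ n S)).map ((↑) : ℚ → ℂ)).det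
      = ∏ j : Fin n, Pval n S (omegaC n ^ (j.val)) := by
  classical
  have hprim : IsPrimitiveRoot (omegaC n) n := Complex.isPrimitiveRoot_exp n (by omega)
  have hω1 : omegaC n ^ n = 1 := hprim.pow_eq_one
  set V : Matrix (Fin n) (Fin n) ℂ :=
    Matrix.vandermonde (fun i : Fin n => omegaC n ^ i.val) with hV
  have hVd : V.det ≠ 0 := by
    rw [hV, Matrix.det_vandermonde]
    refine Finset.prod_ne_zero_iff.mpr fun i _ => Finset.prod_ne_zero_iff.mpr fun j hj => ?_
    rw [sub_ne_zero]
    intro hEq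
    have hij := hprim.pow_inj j.isLt i.isLt hEq
    have hlt : i < j := Finset.mem_Ioi.mp hj
    exact absurd (Fin.ext hij : j = i) (ne_of_gt hlt)
  have hAV : (adjMat (circ n S)).map ((↑) : ℚ → ℂ) * V
      = V * Matrix.diagonal (fun j : Fin n => Pval n S (omegaC n ^ j.val)) := by
    ext i j
    rw [Matrix.mul_apply, Matrix.mul_diagonal]
    have hz : (omegaC n ^ j.val) ^ n = 1 := by
      rw [← pow_mul, mul_comm, pow_mul, hω1, one_pow]
    calc ∑ k : Fin n, ((adjMat (circ n S)).map ((↑) : ℚ → ℂ)) i k * V k j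
        = ∑ k : Fin n, ((adjMat (circ n S)) i k : ℂ) * (omegaC n ^ j.val) ^ k.val := by
          refine Finset.sum_congr rfl fun k _ => ?_
          rw [Matrix.map_apply, hV, Matrix.vandermonde_apply,
            ← pow_mul, ← pow_mul, mul_comm (k.val)]
      _ = Pval n S (omegaC n ^ j.val) * (omegaC n ^ j.val) ^ i.val :=
          eigen_sum n hn S hSsub _ hz i
      _ = V i j * Pval n S (omegaC n ^ j.val) := by
          rw [hV, Matrix.vandermonde_apply, ← pow_mul, ← pow_mul, mul_comm (i.val), mul_comm]
  have hdet := congrArg Matrix.det hAV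
  rw [Matrix.det_mul, Matrix.det_mul, Matrix.det_diagonal] at hdet
  apply mul_right_cancel₀ hVd
  rw [hdet]
  ring

end AuxLemmas4

/-- If `Circ(n,S)` is a nut graph, then `n` is even, `P(ω^{n/2}) = 0`,
and `P(ω^j) ≠ 0` for all `j ∈ {0,…,n−1}` with `j ≠ n/2`. -/
theorem circulant_nut_even_and_kernel_eigenvalue
    (n : ℕ) (hn : 2 ≤ n) (S : Finset ℕ) (hS : S.Nonempty)
    (hSsub : S ⊆ Finset.Icc 1 (n / 2))
    (hnut : IsNutGraph (circ n S)) :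
    Even n ∧ Pval n S (omegaC n ^ (n / 2)) = 0 ∧
      ∀ j < n, j ≠ n / 2 → Pval n S (omegaC n ^ j) ≠ 0 := by
  classical
  obtain ⟨-, v, hv0, hker, huniq⟩ := hnut
  haveI : NeZero n := ⟨by omega⟩
  have hprim : IsPrimitiveRoot (omegaC n) n := Complex.isPrimitiveRoot_exp n (by omega)
  have hω1 : omegaC n ^ n = 1 := hprim.pow_eq_one
  have hzn : ∀ j : ℕ, (omegaC n ^ j) ^ n = 1 := fun j => by
    rw [← pow_mul, mul_comm, pow_mul, hω1, one_pow]
  have claimC : ∀ j : ℕ, j < n → Pval n S (omegaC n ^ j) = 0 → Even n ∧ j = n / 2 := by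
    intro j hj hPj
    have hu : ∀ i, ∑ k, ((adjMat (circ n S)) i k : ℂ)
        * (fun k : Fin n => (omegaC n ^ j) ^ (k.val)) k = 0 := by
      intro i
      rw [eigen_sum n hn S hSsub _ (hzn j) i, hPj, zero_mul]
    have hr := ratio_lemma (adjMat (circ n S)) v huniq _ hu ⟨1, by omega⟩ ⟨0, by omega⟩
    simp only [pow_one, pow_zero, one_mul] at hr
    set v0 := v ⟨0, by omega⟩ with hv0def
    set v1 := v ⟨1, by omega⟩ with hv1def
    have hv0ne : (v0 : ℂ) ≠ 0 := by exact_mod_cast hv0 _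
    -- hr : ω^j * v0 = v1
    have hzq : omegaC n ^ j = ((v1 / v0 : ℚ) : ℂ) := by
      push_cast
      field_simp
      linear_combination hr
    have hq : ((v1 / v0 : ℚ)) ^ n = 1 := by
      have h2 : ((v1 / v0 : ℚ) : ℂ) ^ n = 1 := by rw [← hzq]; exact hzn j
      exact_mod_cast h2
    rcases (pow_eq_one_iff_of_ne_zero (by omega : n ≠ 0)).mp hq with h1 | ⟨hm1, -⟩
    · exfalso
      have hz1 : omegaC n ^ j = 1 := by rw [hzq, h1]; norm_num
      have hj0 : j = 0 := hprim.pow_inj hj (by omega) (by rw [hz1, pow_zero])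
      rw [hj0, pow_zero] at hPj
      exact Pval_one_ne n hn S hS hSsub hPj
    · have hzm : omegaC n ^ j = -1 := by rw [hzq, hm1]; norm_num
      have h2j : omegaC n ^ (2 * j) = 1 := by
        rw [mul_comm 2 j, pow_mul, hzm]; norm_num
      have hdvd : n ∣ 2 * j := (hprim.pow_eq_one_iff_dvd _).mp h2j
      have hjne : j ≠ 0 := by
        intro h0
        rw [h0, pow_zero] at hzm
        norm_num at hzm
      obtain ⟨c, hc⟩ := hdvd
      have hc1 : c = 1 := by
        rcases Nat.lt_or_ge c 2 with h2 | h2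
        · interval_cases c
          · omega
          · rfl
        · exfalso
          have : n * 2 ≤ n * c := Nat.mul_le_mul_left n h2
          omega
      rw [hc1, mul_one] at hc
      exact ⟨⟨j, by omega⟩, by omega⟩
  have hvne : v ≠ 0 := fun h => hv0 ⟨0, by omega⟩ (by rw [h]; rfl)
  have hdet : (adjMat (circ n S)).det = 0 :=
    Matrix.exists_mulVec_eq_zero_iff.mp ⟨v, hvne, hker⟩
  have hdetC : ((adjMat (circ n S)).map ((↑) : ℚ → ℂ)).det = 0 := by
    have heq : ((adjMat (circ n S)).map ((↑) : ℚ → ℂ))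
        = (Rat.castHom ℂ).mapMatrix (adjMat (circ n S)) := rfl
    rw [heq, ← RingHom.map_det, hdet, map_zero]
  rw [det_prod n hn S hSsub] at hdetC
  obtain ⟨j0, -, hPj0⟩ := Finset.prod_eq_zero_iff.mp hdetC
  obtain ⟨heven, hj0⟩ := claimC j0.val j0.isLt hPj0
  refine ⟨heven, ?_, ?_⟩
  · rw [← hj0]; exact hPj0
  · intro j hj hjne hPj
    exact hjne (claimC j hj hPj).2
end

section
/- Let t ≥ 3 be an odd integer and let n ≥ 4t + 4 be an even integer. If either (a) t ≡ 1 (mod 10) and 5 divides n, or (b) t ≡ 15 (mod 18) and 9 divides n, then the circulant graph Circ(n, S_t) is not a nut graph. -/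
open Finset Polynomial

namespace NutAux

/-- shifting a full-period window of a periodic function -/
lemma sum_window (M : ℕ) (F : ℕ → ℚ) (hF : ∀ s, F (s + M) = F s) (b : ℕ) :
    ∑ j ∈ Finset.range M, F (b + j) = ∑ j ∈ Finset.range M, F j := by
  induction b with
  | zero => simp
  | succ b ih =>
    have h1 : ∑ j ∈ Finset.range (M + 1), F (b + j)
        = (∑ j ∈ Finset.range M, F (b + j)) + F (b + M) :=
      Finset.sum_range_succ _ M
    have h2 : ∑ j ∈ Finset.range (M + 1), F (b + j)
        = (∑ j ∈ Finset.range M, F (b + (j + 1))) + F (b + 0) :=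
      Finset.sum_range_succ' _ M
    have h3 : ∑ j ∈ Finset.range M, F (b + 1 + j)
        = ∑ j ∈ Finset.range M, F (b + (j + 1)) := by
      apply Finset.sum_congr rfl; intro j _; congr 1; omega
    have h4 : F (b + M) = F b := hF b
    have h5 : F (b + 0) = F b := by norm_num
    rw [h3, ← ih]
    linarith [h1.symm.trans h2]

lemma sum_range_add' (f : ℕ → ℚ) (m k : ℕ) :
    ∑ j ∈ Finset.range (m + k), f j
      = ∑ j ∈ Finset.range m, f j + ∑ j ∈ Finset.range k, f (m + j) := by
  induction k with
  | zero => simp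
  | succ k ih =>
    have h : m + (k + 1) = (m + k) + 1 := by omega
    rw [h, Finset.sum_range_succ, ih, Finset.sum_range_succ]
    ring

lemma sum_blocks (M : ℕ) (F : ℕ → ℚ) (hF : ∀ s, F (s + M) = F s) (k a : ℕ) :
    ∑ j ∈ Finset.range (a + M * k), F j
      = ∑ j ∈ Finset.range a, F j + (k : ℚ) * ∑ j ∈ Finset.range M, F j := by
  induction k with
  | zero => simp
  | succ k ih =>
    have h : a + M * (k + 1) = (a + M * k) + M := by ring
    rw [h, sum_range_add', sum_window M F hF (a + M * k), ih]
    push_cast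
    ring

lemma sum_Icc_one (F : ℕ → ℚ) (b : ℕ) :
    ∑ s ∈ Finset.Icc 1 b, F s = ∑ s ∈ Finset.range (b + 1), F s - F 0 := by
  rw [← Finset.Ico_add_one_right_eq_Icc, Finset.sum_Ico_eq_sum_range]
  have h2 : ∑ j ∈ Finset.range (b + 1), F j
      = (∑ j ∈ Finset.range b, F (j + 1)) + F 0 := Finset.sum_range_succ' F b
  have h3 : ∑ j ∈ Finset.range (b + 1 - 1), F (1 + j)
      = ∑ j ∈ Finset.range b, F (j + 1) := by
    apply Finset.sum_congr (by norm_num); intro j _; congr 1; omega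
  rw [h3]; linarith

lemma sum_St (M t : ℕ) (ht : 1 ≤ t) (F : ℕ → ℚ) (hF : ∀ s, F (s + M) = F s)
    (a k : ℕ) (h2t : 2 * t + 2 = a + M * k) :
    ∑ s ∈ St t, F s
      = (∑ j ∈ Finset.range a, F j) + (k : ℚ) * (∑ j ∈ Finset.range M, F j)
        - F 0 - F t := by
  unfold St
  rw [Finset.sum_erase_eq_sub (by simp [Finset.mem_Icc]; omega : t ∈ Finset.Icc 1 (2 * t + 1))]
  rw [sum_Icc_one]
  rw [show 2 * t + 1 + 1 = a + M * k from by omega, sum_blocks M F hF k a]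

/-- The key computation: for `w k = g (k mod M)` with `M ∣ n`, the `i`-th entry of
`A·w` equals `∑_{s ∈ S_t} (g(y+s) + g(y-s))` where `y = i mod M`. -/
lemma mulVec_apply_eq (t n M : ℕ) [NeZero n] (hdvd : M ∣ n) (hn : 4 * t + 4 ≤ n)
    (g : ZMod M → ℚ) (i : Fin n) :
    (adjMat (circ n (St t))).mulVec (fun k : Fin n => g ((k.val : ZMod M))) i
      = ∑ s ∈ St t,
          (g (((i.val : ℕ) : ZMod M) + ((s : ℕ) : ZMod M))
            + g (((i.val : ℕ) : ZMod M) - ((s : ℕ) : ZMod M))) := by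
  classical
  have hSt : ∀ s ∈ St t, 1 ≤ s ∧ s ≤ 2 * t + 1 ∧ s ≠ t := by
    intro s hs
    simp only [St, Finset.mem_erase, Finset.mem_Icc] at hs
    exact ⟨hs.2.1, hs.2.2, hs.1⟩
  set u : ZMod n := ((i.val : ℕ) : ZMod n) with hu
  -- the bijection from `ZMod n` to `Fin n`
  set f : ZMod n → Fin n := fun x => ⟨x.val, ZMod.val_lt x⟩ with hfdef
  have hfval : ∀ x : ZMod n, (((f x).val : ℕ) : ZMod n) = x := fun x =>
    ZMod.natCast_rightInverse x
  have hfinj : Function.Injective f := by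
    intro x y hxy
    exact ZMod.val_injective n (congrArg Fin.val hxy)
  have hfsurj : Function.Surjective f := by
    intro j
    refine ⟨((j.val : ℕ) : ZMod n), ?_⟩
    apply Fin.ext
    exact ZMod.val_cast_of_lt j.isLt
  have hfu : f u = i := by
    apply Fin.ext
    exact ZMod.val_cast_of_lt i.isLt
  -- cast of small naturals into ZMod n is injective / nonzero
  have hne0 : ∀ s ∈ St t, ((s : ℕ) : ZMod n) ≠ 0 := by
    intro s hs h0
    rw [ZMod.natCast_eq_zero_iff] at h0
    have h1 := (hSt s hs).1
    have h2 := (hSt s hs).2.1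
    have := Nat.le_of_dvd (by omega) h0
    omega
  -- the neighbour set of `i`, living in `ZMod n`
  set N : Finset (ZMod n) :=
    ((St t).image fun s : ℕ => u + ((s : ℕ) : ZMod n))
      ∪ ((St t).image fun s : ℕ => u - ((s : ℕ) : ZMod n)) with hN
  have hmem : ∀ x : ZMod n, (circ n (St t)).Adj i (f x) ↔ x ∈ N := by
    intro x
    constructor
    · rintro ⟨hne, s, hs, hor⟩
      rw [hfval x] at hor
      rcases hor with h | h
      · -- u - x = s, so x = u - s
        refine Finset.mem_union_right _ (Finset.mem_image.2 ⟨s, hs, ?_⟩)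
        rw [← h]; ring
      · refine Finset.mem_union_left _ (Finset.mem_image.2 ⟨s, hs, ?_⟩)
        rw [← h]; ring
    · intro hx
      rcases Finset.mem_union.1 hx with hx | hx <;>
        obtain ⟨s, hs, hxeq⟩ := Finset.mem_image.1 hx
      · refine ⟨?_, s, hs, Or.inr ?_⟩
        · intro hix
          have : u = x := hfinj (by rw [hfu, hix])
          rw [← hxeq] at this
          exact hne0 s hs (by linear_combination -this)
        · rw [hfval x, ← hxeq]; ring
      · refine ⟨?_, s, hs, Or.inl ?_⟩
        · intro hix
          have : u = x := hfinj (by rw [hfu, hix])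
          rw [← hxeq] at this
          exact hne0 s hs (by linear_combination this)
        · rw [hfval x, ← hxeq]; ring
  -- rewrite the matrix-vector product as a sum over `ZMod n`
  have hsum0 : (adjMat (circ n (St t))).mulVec (fun k : Fin n => g ((k.val : ZMod M))) i
      = ∑ x : ZMod n, (if (circ n (St t)).Adj i (f x) then (1 : ℚ) else 0)
          * g ((((f x).val : ℕ) : ZMod M)) := by
    rw [Matrix.mulVec, dotProduct]
    exact (Fintype.sum_bijective f ⟨hfinj, hfsurj⟩ _ _ (fun x => rfl)).symm
  rw [hsum0]
  have hsum1 : ∑ x : ZMod n, (if (circ n (St t)).Adj i (f x) then (1 : ℚ) else 0)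
          * g ((((f x).val : ℕ) : ZMod M))
      = ∑ x : ZMod n, (if x ∈ N then g (((x.val : ℕ) : ZMod M)) else 0) := by
    apply Finset.sum_congr rfl
    intro x _
    rw [ite_mul, one_mul, zero_mul]
    exact if_congr (hmem x) rfl rfl
  rw [hsum1, Finset.sum_ite_mem, Finset.univ_inter]
  -- split the union
  have hcastinj : ∀ s ∈ St t, ∀ s' ∈ St t,
      ((s : ℕ) : ZMod n) = ((s' : ℕ) : ZMod n) → s = s' := by
    intro s hs s' hs' h
    have h1 := (hSt s hs).2.1
    have h2 := (hSt s' hs').2.1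
    have := congrArg ZMod.val h
    rwa [ZMod.val_cast_of_lt (by omega), ZMod.val_cast_of_lt (by omega)] at this
  have hdisj : Disjoint ((St t).image fun s : ℕ => u + ((s : ℕ) : ZMod n))
      ((St t).image fun s : ℕ => u - ((s : ℕ) : ZMod n)) := by
    rw [Finset.disjoint_left]
    rintro x hx1 hx2
    obtain ⟨s, hs, hxe⟩ := Finset.mem_image.1 hx1
    obtain ⟨s', hs', hxe'⟩ := Finset.mem_image.1 hx2
    have heq : u + ((s : ℕ) : ZMod n) = u - ((s' : ℕ) : ZMod n) := by rw [hxe, hxe']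
    have h0 : (((s + s' : ℕ)) : ZMod n) = 0 := by
      push_cast
      linear_combination heq
    rw [ZMod.natCast_eq_zero_iff] at h0
    have h1 := (hSt s hs).1
    have h2 := (hSt s hs).2.1
    have h1' := (hSt s' hs').1
    have h2' := (hSt s' hs').2.1
    have := Nat.le_of_dvd (by omega) h0
    omega
  have hinj1 : ∀ s ∈ St t, ∀ s' ∈ St t,
      u + ((s : ℕ) : ZMod n) = u + ((s' : ℕ) : ZMod n) → s = s' := by
    intro s hs s' hs' h
    apply hcastinj s hs s' hs'
    linear_combination h
  have hinj2 : ∀ s ∈ St t, ∀ s' ∈ St t,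
      u - ((s : ℕ) : ZMod n) = u - ((s' : ℕ) : ZMod n) → s = s' := by
    intro s hs s' hs' h
    apply hcastinj s hs s' hs'
    linear_combination -h
  rw [hN, Finset.sum_union hdisj]
  rw [Finset.sum_image hinj1]
  rw [Finset.sum_image hinj2]
  rw [← Finset.sum_add_distrib]
  apply Finset.sum_congr rfl
  intro s _
  have hkey : ∀ x : ZMod n, ((x.val : ℕ) : ZMod M) = ZMod.castHom hdvd (ZMod M) x := by
    intro x
    rw [ZMod.castHom_apply, ZMod.natCast_val]
  rw [hkey, hkey, map_add, map_sub, hu, map_natCast, map_natCast]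

/-- The kernel vector pattern for case (a): period 10 (integer values). -/
def gAZ : ZMod 10 → ℤ := fun z => if z = 0 then 1 else if z = 5 then -1 else 0

/-- The kernel vector pattern for case (b): period 18, in fact period 9 (integer values). -/
def gBZ : ZMod 18 → ℤ := fun z =>
  if z = 3 ∨ z = 12 then 1 else if z = 0 ∨ z = 9 then -1 else 0

/-- The kernel vector pattern for case (a): period 10. -/
def gA : ZMod 10 → ℚ := fun z => ((gAZ z : ℤ) : ℚ)

/-- The kernel vector pattern for case (b): period 18 (in fact period 9). -/
def gB : ZMod 18 → ℚ := fun z => ((gBZ z : ℤ) : ℚ)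

lemma gAZ_full : ∀ y : ZMod 10,
    ∑ r ∈ Finset.range 10, (gAZ (y + ((r : ℕ) : ZMod 10)) + gAZ (y - ((r : ℕ) : ZMod 10))) = 0 := by
  decide

lemma gA_full (y : ZMod 10) :
    ∑ r ∈ Finset.range 10, (gA (y + ((r : ℕ) : ZMod 10)) + gA (y - ((r : ℕ) : ZMod 10))) = 0 := by
  have h := gAZ_full y
  unfold gA
  exact_mod_cast congrArg (fun z : ℤ => (z : ℚ)) h

lemma gAZ_main : ∀ y : ZMod 10,
    (∑ r ∈ Finset.range 4, (gAZ (y + ((r : ℕ) : ZMod 10)) + gAZ (y - ((r : ℕ) : ZMod 10))))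
      - (gAZ (y + ((0 : ℕ) : ZMod 10)) + gAZ (y - ((0 : ℕ) : ZMod 10)))
      - (gAZ (y + ((1 : ℕ) : ZMod 10)) + gAZ (y - ((1 : ℕ) : ZMod 10))) = 0 := by
  decide

lemma gA_main (y : ZMod 10) :
    (∑ r ∈ Finset.range 4, (gA (y + ((r : ℕ) : ZMod 10)) + gA (y - ((r : ℕ) : ZMod 10))))
      - (gA (y + ((0 : ℕ) : ZMod 10)) + gA (y - ((0 : ℕ) : ZMod 10)))
      - (gA (y + ((1 : ℕ) : ZMod 10)) + gA (y - ((1 : ℕ) : ZMod 10))) = 0 := by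
  have h := gAZ_main y
  unfold gA
  exact_mod_cast congrArg (fun z : ℤ => (z : ℚ)) h

lemma gBZ_full : ∀ y : ZMod 18,
    ∑ r ∈ Finset.range 18, (gBZ (y + ((r : ℕ) : ZMod 18)) + gBZ (y - ((r : ℕ) : ZMod 18))) = 0 := by
  decide

lemma gB_full (y : ZMod 18) :
    ∑ r ∈ Finset.range 18, (gB (y + ((r : ℕ) : ZMod 18)) + gB (y - ((r : ℕ) : ZMod 18))) = 0 := by
  have h := gBZ_full y
  unfold gB
  exact_mod_cast congrArg (fun z : ℤ => (z : ℚ)) h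

lemma gBZ_main : ∀ y : ZMod 18,
    (∑ r ∈ Finset.range 14, (gBZ (y + ((r : ℕ) : ZMod 18)) + gBZ (y - ((r : ℕ) : ZMod 18))))
      - (gBZ (y + ((0 : ℕ) : ZMod 18)) + gBZ (y - ((0 : ℕ) : ZMod 18)))
      - (gBZ (y + ((15 : ℕ) : ZMod 18)) + gBZ (y - ((15 : ℕ) : ZMod 18))) = 0 := by
  decide

lemma gB_main (y : ZMod 18) :
    (∑ r ∈ Finset.range 14, (gB (y + ((r : ℕ) : ZMod 18)) + gB (y - ((r : ℕ) : ZMod 18))))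
      - (gB (y + ((0 : ℕ) : ZMod 18)) + gB (y - ((0 : ℕ) : ZMod 18)))
      - (gB (y + ((15 : ℕ) : ZMod 18)) + gB (y - ((15 : ℕ) : ZMod 18))) = 0 := by
  have h := gBZ_main y
  unfold gB
  exact_mod_cast congrArg (fun z : ℤ => (z : ℚ)) h

end NutAux


open NutAux in
/-- Let `t ≥ 3` be odd and `n ≥ 4t+4` even. If either
`t ≡ 1 (mod 10)` and `5 ∣ n`, or `t ≡ 15 (mod 18)` and `9 ∣ n`, then
`Circ(n, S_t)` is not a nut graph. -/
theorem circulant_St_not_nut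
    (t : ℕ) (ht3 : 3 ≤ t) (htodd : Odd t) (n : ℕ) (hn : 4 * t + 4 ≤ n)
    (hneven : Even n)
    (hcond : (t % 10 = 1 ∧ 5 ∣ n) ∨ (t % 18 = 15 ∧ 9 ∣ n)) :
    ¬ IsNutGraph (circ n (St t)) := by
  have hNZ : NeZero n := ⟨by omega⟩
  have h2 : 2 ∣ n := hneven.two_dvd
  have hn1 : 1 < n := by omega
  have hn0 : 0 < n := by omega
  rintro ⟨hn2, v, hv, hker, huniq⟩
  rcases hcond with ⟨ht1, h5⟩ | ⟨ht1, h9⟩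
  · -- case (a): work modulo 10
    have hdvd : (10 : ℕ) ∣ n := by omega
    set w : Fin n → ℚ := fun k => gA ((k.val : ZMod 10)) with hw
    have hwker : (adjMat (circ n (St t))).mulVec w = 0 := by
      funext i
      rw [Pi.zero_apply, hw, mulVec_apply_eq t n 10 hdvd hn gA i]
      set y : ZMod 10 := ((i.val : ℕ) : ZMod 10) with hy
      have hFper : ∀ s : ℕ,
          (gA (y + (((s + 10 : ℕ)) : ZMod 10)) + gA (y - (((s + 10 : ℕ)) : ZMod 10)))
            = gA (y + ((s : ℕ) : ZMod 10)) + gA (y - ((s : ℕ) : ZMod 10)) := by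
        intro s
        have : (((s + 10 : ℕ)) : ZMod 10) = ((s : ℕ) : ZMod 10) := by
          push_cast
          simp [show ((10 : ℕ) : ZMod 10) = 0 from by decide, show (10 : ZMod 10) = 0 from by decide]
        rw [this]
      rw [sum_St 10 t (by omega)
        (fun s : ℕ => gA (y + ((s : ℕ) : ZMod 10)) + gA (y - ((s : ℕ) : ZMod 10)))
        hFper 4 (2 * (t / 10)) (by omega)]
      have hT : ((t : ℕ) : ZMod 10) = ((1 : ℕ) : ZMod 10) := by
        rw [← ZMod.natCast_mod t 10, ht1]
      rw [hT, gA_full y]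
      have := gA_main y
      linear_combination this
    obtain ⟨c, hc⟩ := huniq w hwker
    have hi1 : w ⟨1, hn1⟩ = 0 := by
      show gA (((1 : ℕ)) : ZMod 10) = 0
      unfold gA
      norm_num
      decide
    have hi0 : w ⟨0, hn0⟩ = 1 := by
      show gA (((0 : ℕ)) : ZMod 10) = 1
      unfold gA
      norm_num
      decide
    have hc0 : c = 0 := by
      have h := congrFun hc ⟨1, hn1⟩
      rw [Pi.smul_apply, smul_eq_mul] at h
      rw [hi1] at h
      have := hv ⟨1, hn1⟩
      rcases mul_eq_zero.1 h.symm with h' | h'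
      · exact h'
      · exact absurd h' this
    have h := congrFun hc ⟨0, hn0⟩
    rw [hi0, hc0] at h
    simp at h
  · -- case (b): work modulo 18
    have hdvd : (18 : ℕ) ∣ n := by omega
    set w : Fin n → ℚ := fun k => gB ((k.val : ZMod 18)) with hw
    have hwker : (adjMat (circ n (St t))).mulVec w = 0 := by
      funext i
      rw [Pi.zero_apply, hw, mulVec_apply_eq t n 18 hdvd hn gB i]
      set y : ZMod 18 := ((i.val : ℕ) : ZMod 18) with hy
      have hFper : ∀ s : ℕ,
          (gB (y + (((s + 18 : ℕ)) : ZMod 18)) + gB (y - (((s + 18 : ℕ)) : ZMod 18)))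
            = gB (y + ((s : ℕ) : ZMod 18)) + gB (y - ((s : ℕ) : ZMod 18)) := by
        intro s
        have : (((s + 18 : ℕ)) : ZMod 18) = ((s : ℕ) : ZMod 18) := by
          push_cast
          simp [show ((18 : ℕ) : ZMod 18) = 0 from by decide, show (18 : ZMod 18) = 0 from by decide]
        rw [this]
      rw [sum_St 18 t (by omega)
        (fun s : ℕ => gB (y + ((s : ℕ) : ZMod 18)) + gB (y - ((s : ℕ) : ZMod 18)))
        hFper 14 (2 * (t / 18) + 1) (by omega)]
      have hT : ((t : ℕ) : ZMod 18) = ((15 : ℕ) : ZMod 18) := by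
        rw [← ZMod.natCast_mod t 18, ht1]
      rw [hT, gB_full y]
      have := gB_main y
      linear_combination this
    obtain ⟨c, hc⟩ := huniq w hwker
    have hi1 : w ⟨1, hn1⟩ = 0 := by
      show gB (((1 : ℕ)) : ZMod 18) = 0
      unfold gB
      norm_num
      decide
    have hi0 : w ⟨0, hn0⟩ = -1 := by
      show gB (((0 : ℕ)) : ZMod 18) = -1
      unfold gB
      norm_num
      decide
    have hc0 : c = 0 := by
      have h := congrFun hc ⟨1, hn1⟩
      rw [Pi.smul_apply, smul_eq_mul] at h
      rw [hi1] at h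
      have := hv ⟨1, hn1⟩
      rcases mul_eq_zero.1 h.symm with h' | h'
      · exact h'
      · exact absurd h' this
    have h := congrFun hc ⟨0, hn0⟩
    rw [hi0, hc0] at h
    simp at h
end

section
/- Let t ≥ 3 be an odd integer with t ≢ 1 (mod 10) and t ≢ 15 (mod 18), and let b be a positive integer that is not square-free, i.e., p² divides b for some prime p. Then the b-th cyclotomic polynomial Φ_b(y) does not divide Q_t(y) in ℤ[y]. -/
open Finset Polynomial

noncomputable def Wsum (b p : ℕ) (ζ : ℂ) (s e : ℕ) : ℂ :=
  ∑ j ∈ Finset.range p, ((ζ ^ (b / p)) ^ (e + s * (p - 1))) ^ j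

lemma Wsum_eq_card {b p : ℕ} {ζ : ℂ} (hpb : p ∣ b) (hζb : ζ ^ b = 1)
    {s e : ℕ} (h : p ∣ e + s * (p - 1)) : Wsum b p ζ s e = p := by
  have hω : (ζ ^ (b / p)) ^ p = 1 := by
    rw [← pow_mul, Nat.div_mul_cancel hpb, hζb]
  obtain ⟨c, hc⟩ := h
  have h1 : ((ζ ^ (b / p)) ^ (e + s * (p - 1))) = 1 := by
    rw [hc, pow_mul, hω, one_pow]
  simp [Wsum, h1]

lemma Wsum_eq_zero {b p : ℕ} {ζ : ℂ} (hω : IsPrimitiveRoot (ζ ^ (b / p)) p)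
    {s e : ℕ} (h : ¬ p ∣ e + s * (p - 1)) : Wsum b p ζ s e = 0 := by
  set x := (ζ ^ (b / p)) ^ (e + s * (p - 1)) with hx
  have hx1 : x ≠ 1 := fun hh => h ((hω.pow_eq_one_iff_dvd _).mp hh)
  have hxp : x ^ p = 1 := by
    rw [hx, ← pow_mul, mul_comm (e + s * (p - 1)) p, pow_mul, hω.pow_eq_one, one_pow]
  rw [Wsum, geom_sum_eq hx1, hxp]
  simp

lemma qt_master {t b p : ℕ} (hp : p.Prime) (hb : 0 < b) (hsq : p ^ 2 ∣ b)
    (hdvd : Polynomial.cyclotomic b ℤ ∣ Qt t) {ζ : ℂ} (hζ : IsPrimitiveRoot ζ b) (s : ℕ) :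
    ζ ^ (4*t+3) * Wsum b p ζ s (4*t+3) - ζ ^ (3*t+2) * Wsum b p ζ s (3*t+2)
      + ζ ^ (3*t+1) * Wsum b p ζ s (3*t+1) - ζ ^ (2*t+2) * Wsum b p ζ s (2*t+2)
      + ζ ^ (2*t+1) * Wsum b p ζ s (2*t+1) - ζ ^ (t+2) * Wsum b p ζ s (t+2)
      + ζ ^ (t+1) * Wsum b p ζ s (t+1) - Wsum b p ζ s 0 = 0 := by
  have hpb : p ∣ b := (dvd_pow_self p two_ne_zero).trans hsq
  have hcop : ∀ j : ℕ, Nat.Coprime (1 + j * (b / p)) b := by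
    intro j
    rw [Nat.coprime_comm]
    by_contra hcon
    obtain ⟨q, hq, hqb, hq1⟩ := Nat.Prime.not_coprime_iff_dvd.mp hcon
    have hqbp : q ∣ b / p := by
      rcases eq_or_ne q p with rfl | hne
      · exact (Nat.dvd_div_iff_mul_dvd hpb).mpr (by rwa [← pow_two])
      · have hb2 : b = p * (b / p) := (Nat.mul_div_cancel' hpb).symm
        rcases (Nat.Prime.dvd_mul hq).mp (hb2 ▸ hqb) with h | h
        · exact absurd ((Nat.prime_dvd_prime_iff_eq hq hp).mp h) hne
        · exact h
    have : q ∣ 1 := (Nat.dvd_add_right (Dvd.dvd.mul_left hqbp j)).mp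
      (by rwa [Nat.add_comm] at hq1)
    exact hq.one_lt.ne' (Nat.dvd_one.mp this)
  haveI : NeZero (b : ℂ) := ⟨by exact_mod_cast hb.ne'⟩
  have hroot : ∀ j : ℕ,
      (ζ ^ (4*t+3) * ((ζ ^ (b/p)) ^ (4*t+3)) ^ j - ζ ^ (3*t+2) * ((ζ ^ (b/p)) ^ (3*t+2)) ^ j
        + ζ ^ (3*t+1) * ((ζ ^ (b/p)) ^ (3*t+1)) ^ j - ζ ^ (2*t+2) * ((ζ ^ (b/p)) ^ (2*t+2)) ^ j
        + ζ ^ (2*t+1) * ((ζ ^ (b/p)) ^ (2*t+1)) ^ j - ζ ^ (t+2) * ((ζ ^ (b/p)) ^ (t+2)) ^ j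
        + ζ ^ (t+1) * ((ζ ^ (b/p)) ^ (t+1)) ^ j - 1) = 0 := by
    intro j
    have hprimj : IsPrimitiveRoot (ζ ^ (1 + j * (b / p))) b := hζ.pow_of_coprime _ (hcop j)
    have h1 : (Polynomial.cyclotomic b ℂ).IsRoot (ζ ^ (1 + j * (b / p))) :=
      Polynomial.isRoot_cyclotomic_iff.mpr hprimj
    obtain ⟨g, hg⟩ := hdvd
    have h2 : Polynomial.aeval (ζ ^ (1 + j * (b / p))) (Qt t) = 0 := by
      rw [hg, map_mul]
      have h3 : Polynomial.aeval (ζ ^ (1 + j * (b / p))) (Polynomial.cyclotomic b ℤ) = 0 := by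
        rw [Polynomial.aeval_def, ← Polynomial.eval_map, Polynomial.map_cyclotomic]
        exact h1
      rw [h3, zero_mul]
    have key : ∀ e : ℕ, (ζ ^ (1 + j * (b/p))) ^ e = ζ ^ e * ((ζ ^ (b/p)) ^ e) ^ j := by
      intro e
      simp only [← pow_mul, ← pow_add]
      congr 1
      ring
    simp only [Qt, map_sub, map_add, map_pow, Polynomial.aeval_X, map_one] at h2
    simp only [key] at h2
    exact h2
  have expand : ζ ^ (4*t+3) * Wsum b p ζ s (4*t+3) - ζ ^ (3*t+2) * Wsum b p ζ s (3*t+2)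
      + ζ ^ (3*t+1) * Wsum b p ζ s (3*t+1) - ζ ^ (2*t+2) * Wsum b p ζ s (2*t+2)
      + ζ ^ (2*t+1) * Wsum b p ζ s (2*t+1) - ζ ^ (t+2) * Wsum b p ζ s (t+2)
      + ζ ^ (t+1) * Wsum b p ζ s (t+1) - Wsum b p ζ s 0
      = ∑ j ∈ Finset.range p, ((ζ ^ (b/p)) ^ (s * (p-1))) ^ j *
        (ζ ^ (4*t+3) * ((ζ ^ (b/p)) ^ (4*t+3)) ^ j - ζ ^ (3*t+2) * ((ζ ^ (b/p)) ^ (3*t+2)) ^ j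
        + ζ ^ (3*t+1) * ((ζ ^ (b/p)) ^ (3*t+1)) ^ j - ζ ^ (2*t+2) * ((ζ ^ (b/p)) ^ (2*t+2)) ^ j
        + ζ ^ (2*t+1) * ((ζ ^ (b/p)) ^ (2*t+1)) ^ j - ζ ^ (t+2) * ((ζ ^ (b/p)) ^ (t+2)) ^ j
        + ζ ^ (t+1) * ((ζ ^ (b/p)) ^ (t+1)) ^ j - 1) := by
    simp only [Wsum, Finset.mul_sum, ← Finset.sum_sub_distrib, ← Finset.sum_add_distrib]
    refine Finset.sum_congr rfl (fun j _ => ?_)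
    simp only [pow_add, mul_pow, pow_zero, one_mul]
    ring
  rw [expand]
  exact Finset.sum_eq_zero (fun j _ => by rw [hroot j, mul_zero])

/-- For odd `t ≥ 3` with `t ≢ 1 (mod 10)` and `t ≢ 15 (mod 18)`,
and every positive `b` that is not square-free, `Φ_b(y)` does not divide `Q_t(y)`. -/
theorem cyclotomic_not_dvd_Qt_of_not_squarefree
    (t : ℕ) (ht3 : 3 ≤ t) (htodd : Odd t) (ht10 : t % 10 ≠ 1)
    (ht18 : t % 18 ≠ 15) (b : ℕ) (hb : 0 < b)
    (hsq : ∃ p : ℕ, p.Prime ∧ p ^ 2 ∣ b) :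
    ¬ Polynomial.cyclotomic b ℤ ∣ Qt t := by
  intro hdvd
  obtain ⟨p, hp, hpsq⟩ := hsq
  have hpb : p ∣ b := (dvd_pow_self p two_ne_zero).trans hpsq
  have ht2 : t % 2 = 1 := Nat.odd_iff.mp htodd
  have hζp : IsPrimitiveRoot (Complex.exp (2 * Real.pi * Complex.I / b)) b :=
    Complex.isPrimitiveRoot_exp b hb.ne'
  set ζ : ℂ := Complex.exp (2 * Real.pi * Complex.I / b) with hζdef
  have hζb : ζ ^ b = 1 := hζp.pow_eq_one
  have hω : IsPrimitiveRoot (ζ ^ (b / p)) p := hζp.pow hb (Nat.div_mul_cancel hpb).symm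
  have hζ0 : ζ ≠ 0 := by
    intro h
    rw [h, zero_pow hb.ne'] at hζb
    exact zero_ne_one hζb
  rcases eq_or_ne p 2 with rfl | hp2
  · -- p = 2
    have hb4 : (4:ℕ) ∣ b := by simpa using hpsq
    have hb1 : b - 1 + 1 = b := by omega
    have hcq : Nat.Coprime (b-1) b := by
      obtain ⟨c, rfl⟩ : ∃ c, b = c + 1 := ⟨b-1, by omega⟩
      simp only [Nat.add_sub_cancel, Nat.Coprime]
      rw [Nat.add_comm, Nat.gcd_add_self_right, Nat.gcd_one_right]
    have hζq : IsPrimitiveRoot (ζ ^ (b-1)) b := hζp.pow_of_coprime _ hcq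
    have hqb : (ζ ^ (b-1)) ^ b = 1 := hζq.pow_eq_one
    have hωq : IsPrimitiveRoot ((ζ ^ (b-1)) ^ (b / 2)) 2 :=
      hζq.pow hb (Nat.div_mul_cancel hpb).symm
    set ξ : ℂ := ζ ^ (b-1) with hξdef
    have M0 := qt_master hp hb hpsq hdvd hζp (0)
    have M0w1 : Wsum b 2 (ζ) (0) (4*t+3) = 0 := Wsum_eq_zero hω (by omega)
    have M0w2 : Wsum b 2 (ζ) (0) (3*t+2) = 0 := Wsum_eq_zero hω (by omega)
    have M0w3 : Wsum b 2 (ζ) (0) (3*t+1) = ((2:ℕ):ℂ) := Wsum_eq_card hpb hζb (by omega)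
    have M0w4 : Wsum b 2 (ζ) (0) (2*t+2) = ((2:ℕ):ℂ) := Wsum_eq_card hpb hζb (by omega)
    have M0w5 : Wsum b 2 (ζ) (0) (2*t+1) = 0 := Wsum_eq_zero hω (by omega)
    have M0w6 : Wsum b 2 (ζ) (0) (t+2) = 0 := Wsum_eq_zero hω (by omega)
    have M0w7 : Wsum b 2 (ζ) (0) (t+1) = ((2:ℕ):ℂ) := Wsum_eq_card hpb hζb (by omega)
    have M0w8 : Wsum b 2 (ζ) (0) (0) = ((2:ℕ):ℂ) := Wsum_eq_card hpb hζb (by omega)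
    rw [M0w1, M0w2, M0w3, M0w4, M0w5, M0w6, M0w7, M0w8] at M0
    have N0 := qt_master hp hb hpsq hdvd hζq (0)
    have N0w1 : Wsum b 2 (ξ) (0) (4*t+3) = 0 := Wsum_eq_zero hωq (by omega)
    have N0w2 : Wsum b 2 (ξ) (0) (3*t+2) = 0 := Wsum_eq_zero hωq (by omega)
    have N0w3 : Wsum b 2 (ξ) (0) (3*t+1) = ((2:ℕ):ℂ) := Wsum_eq_card hpb hqb (by omega)
    have N0w4 : Wsum b 2 (ξ) (0) (2*t+2) = ((2:ℕ):ℂ) := Wsum_eq_card hpb hqb (by omega)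
    have N0w5 : Wsum b 2 (ξ) (0) (2*t+1) = 0 := Wsum_eq_zero hωq (by omega)
    have N0w6 : Wsum b 2 (ξ) (0) (t+2) = 0 := Wsum_eq_zero hωq (by omega)
    have N0w7 : Wsum b 2 (ξ) (0) (t+1) = ((2:ℕ):ℂ) := Wsum_eq_card hpb hqb (by omega)
    have N0w8 : Wsum b 2 (ξ) (0) (0) = ((2:ℕ):ℂ) := Wsum_eq_card hpb hqb (by omega)
    rw [N0w1, N0w2, N0w3, N0w4, N0w5, N0w6, N0w7, N0w8] at N0
    push_cast at M0 N0
    have E1 : ζ^(3*t+1) - (ζ^(t+1))^2 + ζ^(t+1) - 1 = 0 := by linear_combination M0/2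
    have E2 : ξ^(3*t+1) - (ξ^(t+1))^2 + ξ^(t+1) - 1 = 0 := by
      linear_combination N0/2
    have hmul : ζ * ξ = 1 := by
      rw [hξdef, mul_comm, ← pow_succ, hb1, hζb]
    have huu : ζ^(t+1) * ξ^(t+1) = 1 := by
      rw [← mul_pow, hmul, one_pow]
    have hvv : ζ^(3*t+1) * ξ^(3*t+1) = 1 := by
      rw [← mul_pow, hmul, one_pow]
    have key : (ζ^(t+1) - 1)^2 * ((ζ^(t+1))^2 + 1) = 0 := by
      clear_value ξ
      linear_combination (-((ζ^(t+1))^2*ζ^(3*t+1)))*E2 + (ζ^(t+1))^2*hvv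
        + (-(ζ^(3*t+1))*(ζ^(t+1)*ξ^(t+1)+1) + ζ^(t+1)*ζ^(3*t+1))*huu
        - ((ζ^(t+1))^2-ζ^(t+1)+1)*E1
    rcases mul_eq_zero.mp key with h | h
    · have h' : ζ^(t+1) - 1 = 0 := pow_eq_zero_iff two_ne_zero |>.mp h
      have hu1 : ζ^(t+1) = 1 := by linear_combination h'
      have hv1 : ζ^(3*t+1) = 1 := by linear_combination E1 + ζ^(t+1)*hu1
      have d1 : b ∣ t+1 := (hζp.pow_eq_one_iff_dvd _).mp hu1
      have d2 : b ∣ 3*t+1 := (hζp.pow_eq_one_iff_dvd _).mp hv1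
      have d3 : b ∣ 2 := by
        have h12 : b ∣ (t+1)*3 := d1.mul_right 3
        have h13 := Nat.dvd_sub h12 d2
        rwa [show (t+1)*3 - (3*t+1) = 2 by omega] at h13
      have hle := Nat.le_of_dvd (by norm_num) d3
      have hge := Nat.le_of_dvd hb hb4
      omega
    · have hveq : ζ^(3*t+1) = -(ζ^(t+1)) := by linear_combination E1 + h
      have h42 : ζ^(4*t+2) = 1 := by
        have hsp : ζ^(4*t+2) = ζ^(3*t+1) * ζ^(t+1) := by
          rw [← pow_add]
          congr 1
          ring
        rw [hsp, hveq]
        linear_combination -h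
      have h44 : ζ^(4*t+4) = 1 := by
        have hsp : ζ^(4*t+4) = ((ζ^(t+1))^2)^2 := by
          rw [← pow_mul, ← pow_mul]
          congr 1
          ring
        have h2 : (ζ^(t+1))^2 = -1 := by linear_combination h
        rw [hsp, h2]
        norm_num
      have d1 : b ∣ 4*t+2 := (hζp.pow_eq_one_iff_dvd _).mp h42
      have d2 : b ∣ 4*t+4 := (hζp.pow_eq_one_iff_dvd _).mp h44
      have d3 : b ∣ 2 := by
        have h13 := Nat.dvd_sub d2 d1
        rwa [show 4*t+4 - (4*t+2) = 2 by omega] at h13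
      have hle := Nat.le_of_dvd (by norm_num) d3
      have hge := Nat.le_of_dvd hb hb4
      omega
  rcases eq_or_ne p 3 with rfl | hp3
  · -- p = 3
    have hb9 : (9:ℕ) ∣ b := by simpa using hpsq
    have hmod : t % 3 = 0 ∨ t % 3 = 1 ∨ t % 3 = 2 := by omega
    rcases hmod with htp | htp | htp
    · -- t ≡ 0 (3)
      have M0 := qt_master hp hb hpsq hdvd hζp (0)
      have M0w1 : Wsum b 3 (ζ) (0) (4*t+3) = ((3:ℕ):ℂ) := Wsum_eq_card hpb hζb (by omega)
      have M0w2 : Wsum b 3 (ζ) (0) (3*t+2) = 0 := Wsum_eq_zero hω (by omega)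
      have M0w3 : Wsum b 3 (ζ) (0) (3*t+1) = 0 := Wsum_eq_zero hω (by omega)
      have M0w4 : Wsum b 3 (ζ) (0) (2*t+2) = 0 := Wsum_eq_zero hω (by omega)
      have M0w5 : Wsum b 3 (ζ) (0) (2*t+1) = 0 := Wsum_eq_zero hω (by omega)
      have M0w6 : Wsum b 3 (ζ) (0) (t+2) = 0 := Wsum_eq_zero hω (by omega)
      have M0w7 : Wsum b 3 (ζ) (0) (t+1) = 0 := Wsum_eq_zero hω (by omega)
      have M0w8 : Wsum b 3 (ζ) (0) (0) = ((3:ℕ):ℂ) := Wsum_eq_card hpb hζb (by omega)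
      rw [M0w1, M0w2, M0w3, M0w4, M0w5, M0w6, M0w7, M0w8] at M0
      have M1 := qt_master hp hb hpsq hdvd hζp (t+1)
      have M1w1 : Wsum b 3 (ζ) (t+1) (4*t+3) = 0 := Wsum_eq_zero hω (by omega)
      have M1w2 : Wsum b 3 (ζ) (t+1) (3*t+2) = 0 := Wsum_eq_zero hω (by omega)
      have M1w3 : Wsum b 3 (ζ) (t+1) (3*t+1) = ((3:ℕ):ℂ) := Wsum_eq_card hpb hζb (by omega)
      have M1w4 : Wsum b 3 (ζ) (t+1) (2*t+2) = 0 := Wsum_eq_zero hω (by omega)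
      have M1w5 : Wsum b 3 (ζ) (t+1) (2*t+1) = ((3:ℕ):ℂ) := Wsum_eq_card hpb hζb (by omega)
      have M1w6 : Wsum b 3 (ζ) (t+1) (t+2) = 0 := Wsum_eq_zero hω (by omega)
      have M1w7 : Wsum b 3 (ζ) (t+1) (t+1) = ((3:ℕ):ℂ) := Wsum_eq_card hpb hζb (by omega)
      have M1w8 : Wsum b 3 (ζ) (t+1) (0) = 0 := Wsum_eq_zero hω (by omega)
      rw [M1w1, M1w2, M1w3, M1w4, M1w5, M1w6, M1w7, M1w8] at M1
      push_cast at M0 M1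
      have h43 : ζ^(4*t+3) = 1 := by linear_combination M0/3
      have hsum : ζ^(3*t+1) + ζ^(2*t+1) + ζ^(t+1) = 0 := by linear_combination M1/3
      have hfac : (1 + ζ^t + (ζ^t)^2) * ζ^(t+1) = 0 := by linear_combination hsum
      have h3 : 1 + ζ^t + (ζ^t)^2 = 0 := by
        rcases mul_eq_zero.mp hfac with h | h
        · exact h
        · exact absurd h (pow_ne_zero _ hζ0)
      have hw3 : ζ^(3*t) = 1 := by linear_combination (ζ^t - 1) * h3
      have d1 : b ∣ 4*t+3 := (hζp.pow_eq_one_iff_dvd _).mp h43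
      have d2 : b ∣ 3*t := (hζp.pow_eq_one_iff_dvd _).mp hw3
      have d9 : b ∣ 9 := by
        have h1 := d1.mul_right 3
        have h2 := d2.mul_right 4
        have h3' := Nat.dvd_sub h1 h2
        rwa [show (4*t+3)*3 - 3*t*4 = 9 by omega] at h3'
      have hbeq : b = 9 := Nat.dvd_antisymm d9 hb9
      rw [hbeq] at d1
      omega
    · -- t ≡ 1 (3)
      have M1 := qt_master hp hb hpsq hdvd hζp (t+1)
      have M1w1 : Wsum b 3 (ζ) (t+1) (4*t+3) = 0 := Wsum_eq_zero hω (by omega)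
      have M1w2 : Wsum b 3 (ζ) (t+1) (3*t+2) = ((3:ℕ):ℂ) := Wsum_eq_card hpb hζb (by omega)
      have M1w3 : Wsum b 3 (ζ) (t+1) (3*t+1) = 0 := Wsum_eq_zero hω (by omega)
      have M1w4 : Wsum b 3 (ζ) (t+1) (2*t+2) = 0 := Wsum_eq_zero hω (by omega)
      have M1w5 : Wsum b 3 (ζ) (t+1) (2*t+1) = 0 := Wsum_eq_zero hω (by omega)
      have M1w6 : Wsum b 3 (ζ) (t+1) (t+2) = 0 := Wsum_eq_zero hω (by omega)
      have M1w7 : Wsum b 3 (ζ) (t+1) (t+1) = ((3:ℕ):ℂ) := Wsum_eq_card hpb hζb (by omega)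
      have M1w8 : Wsum b 3 (ζ) (t+1) (0) = 0 := Wsum_eq_zero hω (by omega)
      rw [M1w1, M1w2, M1w3, M1w4, M1w5, M1w6, M1w7, M1w8] at M1
      have M0 := qt_master hp hb hpsq hdvd hζp (0)
      have M0w1 : Wsum b 3 (ζ) (0) (4*t+3) = 0 := Wsum_eq_zero hω (by omega)
      have M0w2 : Wsum b 3 (ζ) (0) (3*t+2) = 0 := Wsum_eq_zero hω (by omega)
      have M0w3 : Wsum b 3 (ζ) (0) (3*t+1) = 0 := Wsum_eq_zero hω (by omega)
      have M0w4 : Wsum b 3 (ζ) (0) (2*t+2) = 0 := Wsum_eq_zero hω (by omega)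
      have M0w5 : Wsum b 3 (ζ) (0) (2*t+1) = ((3:ℕ):ℂ) := Wsum_eq_card hpb hζb (by omega)
      have M0w6 : Wsum b 3 (ζ) (0) (t+2) = ((3:ℕ):ℂ) := Wsum_eq_card hpb hζb (by omega)
      have M0w7 : Wsum b 3 (ζ) (0) (t+1) = 0 := Wsum_eq_zero hω (by omega)
      have M0w8 : Wsum b 3 (ζ) (0) (0) = ((3:ℕ):ℂ) := Wsum_eq_card hpb hζb (by omega)
      rw [M0w1, M0w2, M0w3, M0w4, M0w5, M0w6, M0w7, M0w8] at M0
      push_cast at M1 M0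
      have heq : ζ^(3*t+2) = ζ^(t+1) := by linear_combination -M1/3
      have hfac : ζ^(t+1) * (ζ^(2*t+1) - 1) = 0 := by linear_combination heq
      have h21 : ζ^(2*t+1) = 1 := by
        rcases mul_eq_zero.mp hfac with h | h
        · exact absurd h (pow_ne_zero _ hζ0)
        · linear_combination h
      have hz : ζ^(t+2) = 0 := by linear_combination -M0/3 + h21
      exact hζ0 ((pow_eq_zero_iff (by omega : (t+2:ℕ) ≠ 0)).mp hz)
    · -- t ≡ 2 (3)
      have M0 := qt_master hp hb hpsq hdvd hζp (0)
      have M0w1 : Wsum b 3 (ζ) (0) (4*t+3) = 0 := Wsum_eq_zero hω (by omega)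
      have M0w2 : Wsum b 3 (ζ) (0) (3*t+2) = 0 := Wsum_eq_zero hω (by omega)
      have M0w3 : Wsum b 3 (ζ) (0) (3*t+1) = 0 := Wsum_eq_zero hω (by omega)
      have M0w4 : Wsum b 3 (ζ) (0) (2*t+2) = ((3:ℕ):ℂ) := Wsum_eq_card hpb hζb (by omega)
      have M0w5 : Wsum b 3 (ζ) (0) (2*t+1) = 0 := Wsum_eq_zero hω (by omega)
      have M0w6 : Wsum b 3 (ζ) (0) (t+2) = 0 := Wsum_eq_zero hω (by omega)
      have M0w7 : Wsum b 3 (ζ) (0) (t+1) = ((3:ℕ):ℂ) := Wsum_eq_card hpb hζb (by omega)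
      have M0w8 : Wsum b 3 (ζ) (0) (0) = ((3:ℕ):ℂ) := Wsum_eq_card hpb hζb (by omega)
      rw [M0w1, M0w2, M0w3, M0w4, M0w5, M0w6, M0w7, M0w8] at M0
      have M2 := qt_master hp hb hpsq hdvd hζp (t+2)
      have M2w1 : Wsum b 3 (ζ) (t+2) (4*t+3) = 0 := Wsum_eq_zero hω (by omega)
      have M2w2 : Wsum b 3 (ζ) (t+2) (3*t+2) = 0 := Wsum_eq_zero hω (by omega)
      have M2w3 : Wsum b 3 (ζ) (t+2) (3*t+1) = ((3:ℕ):ℂ) := Wsum_eq_card hpb hζb (by omega)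
      have M2w4 : Wsum b 3 (ζ) (t+2) (2*t+2) = 0 := Wsum_eq_zero hω (by omega)
      have M2w5 : Wsum b 3 (ζ) (t+2) (2*t+1) = 0 := Wsum_eq_zero hω (by omega)
      have M2w6 : Wsum b 3 (ζ) (t+2) (t+2) = ((3:ℕ):ℂ) := Wsum_eq_card hpb hζb (by omega)
      have M2w7 : Wsum b 3 (ζ) (t+2) (t+1) = 0 := Wsum_eq_zero hω (by omega)
      have M2w8 : Wsum b 3 (ζ) (t+2) (0) = 0 := Wsum_eq_zero hω (by omega)
      rw [M2w1, M2w2, M2w3, M2w4, M2w5, M2w6, M2w7, M2w8] at M2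
      push_cast at M0 M2
      have E : -((ζ^(t+1))^2) + ζ^(t+1) - 1 = 0 := by linear_combination M0/3
      have heq : ζ^(3*t+1) = ζ^(t+2) := by linear_combination M2/3
      obtain ⟨k, hk⟩ : ∃ k, 3*t+1 = (t+2) + k := ⟨2*t-1, by omega⟩
      rw [hk, pow_add] at heq
      have hk1 : ζ^k = 1 := mul_left_cancel₀ (pow_ne_zero (t+2) hζ0) (heq.trans (mul_one _).symm)
      have dk : b ∣ 2*t-1 := by
        have hd := (hζp.pow_eq_one_iff_dvd _).mp hk1
        rwa [show k = 2*t-1 by omega] at hd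
      have hcube : ζ^(3*t+3) = -1 := by linear_combination -(ζ^(t+1)+1)*E
      have h66 : ζ^(6*t+6) = 1 := by
        have hsp : ζ^(6*t+6) = (ζ^(3*t+3))^2 := by
          rw [← pow_mul]
          congr 1
          ring
        rw [hsp, hcube]
        norm_num
      have d66 : b ∣ 6*t+6 := (hζp.pow_eq_one_iff_dvd _).mp h66
      have d9 : b ∣ 9 := by
        have h1 := dk.mul_right 3
        have h2 := Nat.dvd_sub d66 h1
        rwa [show 6*t+6 - (2*t-1)*3 = 9 by omega] at h2
      have hbeq : b = 9 := Nat.dvd_antisymm d9 hb9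
      rw [hbeq] at dk
      have h33 : b ∣ 3*t+3 := by
        rw [hbeq]
        omega
      have hone : ζ^(3*t+3) = 1 := (hζp.pow_eq_one_iff_dvd _).mpr h33
      rw [hone] at hcube
      norm_num at hcube
  rcases eq_or_ne p 5 with rfl | hp5
  · -- p = 5
    have hb25 : (25:ℕ) ∣ b := by simpa using hpsq
    have hmod : t % 5 = 0 ∨ t % 5 = 1 ∨ t % 5 = 2 ∨ t % 5 = 3 ∨ t % 5 = 4 := by omega
    rcases hmod with htp | htp | htp | htp | htp
    · -- t ≡ 0 (5) : exponent 0 isolated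
      have M0 := qt_master hp hb hpsq hdvd hζp (0)
      have M0w1 : Wsum b 5 (ζ) (0) (4*t+3) = 0 := Wsum_eq_zero hω (by omega)
      have M0w2 : Wsum b 5 (ζ) (0) (3*t+2) = 0 := Wsum_eq_zero hω (by omega)
      have M0w3 : Wsum b 5 (ζ) (0) (3*t+1) = 0 := Wsum_eq_zero hω (by omega)
      have M0w4 : Wsum b 5 (ζ) (0) (2*t+2) = 0 := Wsum_eq_zero hω (by omega)
      have M0w5 : Wsum b 5 (ζ) (0) (2*t+1) = 0 := Wsum_eq_zero hω (by omega)
      have M0w6 : Wsum b 5 (ζ) (0) (t+2) = 0 := Wsum_eq_zero hω (by omega)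
      have M0w7 : Wsum b 5 (ζ) (0) (t+1) = 0 := Wsum_eq_zero hω (by omega)
      have M0w8 : Wsum b 5 (ζ) (0) (0) = ((5:ℕ):ℂ) := Wsum_eq_card hpb hζb (by omega)
      rw [M0w1, M0w2, M0w3, M0w4, M0w5, M0w6, M0w7, M0w8] at M0
      push_cast at M0
      have hzz : ((5:ℕ):ℂ) = 0 := by linear_combination -M0
      norm_num at hzz
    · -- t ≡ 1 (5)
      have M0 := qt_master hp hb hpsq hdvd hζp (0)
      have M0w1 : Wsum b 5 (ζ) (0) (4*t+3) = 0 := Wsum_eq_zero hω (by omega)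
      have M0w2 : Wsum b 5 (ζ) (0) (3*t+2) = ((5:ℕ):ℂ) := Wsum_eq_card hpb hζb (by omega)
      have M0w3 : Wsum b 5 (ζ) (0) (3*t+1) = 0 := Wsum_eq_zero hω (by omega)
      have M0w4 : Wsum b 5 (ζ) (0) (2*t+2) = 0 := Wsum_eq_zero hω (by omega)
      have M0w5 : Wsum b 5 (ζ) (0) (2*t+1) = 0 := Wsum_eq_zero hω (by omega)
      have M0w6 : Wsum b 5 (ζ) (0) (t+2) = 0 := Wsum_eq_zero hω (by omega)
      have M0w7 : Wsum b 5 (ζ) (0) (t+1) = 0 := Wsum_eq_zero hω (by omega)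
      have M0w8 : Wsum b 5 (ζ) (0) (0) = ((5:ℕ):ℂ) := Wsum_eq_card hpb hζb (by omega)
      rw [M0w1, M0w2, M0w3, M0w4, M0w5, M0w6, M0w7, M0w8] at M0
      have M2 := qt_master hp hb hpsq hdvd hζp (t+2)
      have M2w1 : Wsum b 5 (ζ) (t+2) (4*t+3) = 0 := Wsum_eq_zero hω (by omega)
      have M2w2 : Wsum b 5 (ζ) (t+2) (3*t+2) = 0 := Wsum_eq_zero hω (by omega)
      have M2w3 : Wsum b 5 (ζ) (t+2) (3*t+1) = 0 := Wsum_eq_zero hω (by omega)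
      have M2w4 : Wsum b 5 (ζ) (t+2) (2*t+2) = 0 := Wsum_eq_zero hω (by omega)
      have M2w5 : Wsum b 5 (ζ) (t+2) (2*t+1) = ((5:ℕ):ℂ) := Wsum_eq_card hpb hζb (by omega)
      have M2w6 : Wsum b 5 (ζ) (t+2) (t+2) = ((5:ℕ):ℂ) := Wsum_eq_card hpb hζb (by omega)
      have M2w7 : Wsum b 5 (ζ) (t+2) (t+1) = 0 := Wsum_eq_zero hω (by omega)
      have M2w8 : Wsum b 5 (ζ) (t+2) (0) = 0 := Wsum_eq_zero hω (by omega)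
      rw [M2w1, M2w2, M2w3, M2w4, M2w5, M2w6, M2w7, M2w8] at M2
      push_cast at M0 M2
      have E0 : ζ^(3*t+2) = -1 := by linear_combination -M0/5
      have heq : ζ^(2*t+1) = ζ^(t+2) := by linear_combination M2/5
      obtain ⟨k, hk⟩ : ∃ k, 2*t+1 = (t+2) + k := ⟨t-1, by omega⟩
      rw [hk, pow_add] at heq
      have hk1 : ζ^k = 1 := mul_left_cancel₀ (pow_ne_zero (t+2) hζ0) (heq.trans (mul_one _).symm)
      have h5 : ζ^(5:ℕ) = -1 := by
        have h32 : 3*t+2 = k*3 + 5 := by omega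
        rw [h32, pow_add, pow_mul, hk1, one_pow, one_mul] at E0
        exact E0
      have h10 : ζ^(10:ℕ) = 1 := by
        have hsp : ζ^(10:ℕ) = (ζ^(5:ℕ))^2 := by rw [← pow_mul]
        rw [hsp, h5]
        norm_num
      have d10 : b ∣ 10 := (hζp.pow_eq_one_iff_dvd _).mp h10
      have hcontra : (25:ℕ) ∣ 10 := hb25.trans d10
      norm_num at hcontra
    · -- t ≡ 2 (5) : t+2 isolated
      have M6 := qt_master hp hb hpsq hdvd hζp (t+2)
      have M6w1 : Wsum b 5 (ζ) (t+2) (4*t+3) = 0 := Wsum_eq_zero hω (by omega)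
      have M6w2 : Wsum b 5 (ζ) (t+2) (3*t+2) = 0 := Wsum_eq_zero hω (by omega)
      have M6w3 : Wsum b 5 (ζ) (t+2) (3*t+1) = 0 := Wsum_eq_zero hω (by omega)
      have M6w4 : Wsum b 5 (ζ) (t+2) (2*t+2) = 0 := Wsum_eq_zero hω (by omega)
      have M6w5 : Wsum b 5 (ζ) (t+2) (2*t+1) = 0 := Wsum_eq_zero hω (by omega)
      have M6w6 : Wsum b 5 (ζ) (t+2) (t+2) = ((5:ℕ):ℂ) := Wsum_eq_card hpb hζb (by omega)
      have M6w7 : Wsum b 5 (ζ) (t+2) (t+1) = 0 := Wsum_eq_zero hω (by omega)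
      have M6w8 : Wsum b 5 (ζ) (t+2) (0) = 0 := Wsum_eq_zero hω (by omega)
      rw [M6w1, M6w2, M6w3, M6w4, M6w5, M6w6, M6w7, M6w8] at M6
      push_cast at M6
      have hzz : ζ ^ (t+2) * ((5:ℕ):ℂ) = 0 := by linear_combination -M6
      rcases mul_eq_zero.mp hzz with hcc | hcc
      · exact hζ0 ((pow_eq_zero_iff (by omega : (t+2:ℕ) ≠ 0)).mp hcc)
      · norm_num at hcc
    · -- t ≡ 3 (5) : t+1 isolated
      have M7 := qt_master hp hb hpsq hdvd hζp (t+1)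
      have M7w1 : Wsum b 5 (ζ) (t+1) (4*t+3) = 0 := Wsum_eq_zero hω (by omega)
      have M7w2 : Wsum b 5 (ζ) (t+1) (3*t+2) = 0 := Wsum_eq_zero hω (by omega)
      have M7w3 : Wsum b 5 (ζ) (t+1) (3*t+1) = 0 := Wsum_eq_zero hω (by omega)
      have M7w4 : Wsum b 5 (ζ) (t+1) (2*t+2) = 0 := Wsum_eq_zero hω (by omega)
      have M7w5 : Wsum b 5 (ζ) (t+1) (2*t+1) = 0 := Wsum_eq_zero hω (by omega)
      have M7w6 : Wsum b 5 (ζ) (t+1) (t+2) = 0 := Wsum_eq_zero hω (by omega)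
      have M7w7 : Wsum b 5 (ζ) (t+1) (t+1) = ((5:ℕ):ℂ) := Wsum_eq_card hpb hζb (by omega)
      have M7w8 : Wsum b 5 (ζ) (t+1) (0) = 0 := Wsum_eq_zero hω (by omega)
      rw [M7w1, M7w2, M7w3, M7w4, M7w5, M7w6, M7w7, M7w8] at M7
      push_cast at M7
      have hzz : ζ ^ (t+1) * ((5:ℕ):ℂ) = 0 := by linear_combination M7
      rcases mul_eq_zero.mp hzz with hcc | hcc
      · exact hζ0 ((pow_eq_zero_iff (by omega : (t+1:ℕ) ≠ 0)).mp hcc)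
      · norm_num at hcc
    · -- t ≡ 4 (5) : t+2 isolated
      have M6 := qt_master hp hb hpsq hdvd hζp (t+2)
      have M6w1 : Wsum b 5 (ζ) (t+2) (4*t+3) = 0 := Wsum_eq_zero hω (by omega)
      have M6w2 : Wsum b 5 (ζ) (t+2) (3*t+2) = 0 := Wsum_eq_zero hω (by omega)
      have M6w3 : Wsum b 5 (ζ) (t+2) (3*t+1) = 0 := Wsum_eq_zero hω (by omega)
      have M6w4 : Wsum b 5 (ζ) (t+2) (2*t+2) = 0 := Wsum_eq_zero hω (by omega)
      have M6w5 : Wsum b 5 (ζ) (t+2) (2*t+1) = 0 := Wsum_eq_zero hω (by omega)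
      have M6w6 : Wsum b 5 (ζ) (t+2) (t+2) = ((5:ℕ):ℂ) := Wsum_eq_card hpb hζb (by omega)
      have M6w7 : Wsum b 5 (ζ) (t+2) (t+1) = 0 := Wsum_eq_zero hω (by omega)
      have M6w8 : Wsum b 5 (ζ) (t+2) (0) = 0 := Wsum_eq_zero hω (by omega)
      rw [M6w1, M6w2, M6w3, M6w4, M6w5, M6w6, M6w7, M6w8] at M6
      push_cast at M6
      have hzz : ζ ^ (t+2) * ((5:ℕ):ℂ) = 0 := by linear_combination -M6
      rcases mul_eq_zero.mp hzz with hcc | hcc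
      · exact hζ0 ((pow_eq_zero_iff (by omega : (t+2:ℕ) ≠ 0)).mp hcc)
      · norm_num at hcc
  rcases eq_or_ne p 7 with rfl | hp7
  · -- p = 7
    have hmod : t % 7 = 0 ∨ t % 7 = 1 ∨ t % 7 = 2 ∨ t % 7 = 3 ∨ t % 7 = 4 ∨ t % 7 = 5 ∨ t % 7 = 6 := by omega
    rcases hmod with htp | htp | htp | htp | htp | htp | htp
    · -- t ≡ 0 (7)
      have M0 := qt_master hp hb hpsq hdvd hζp (0)
      have M0w1 : Wsum b 7 (ζ) (0) (4*t+3) = 0 := Wsum_eq_zero hω (by omega)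
      have M0w2 : Wsum b 7 (ζ) (0) (3*t+2) = 0 := Wsum_eq_zero hω (by omega)
      have M0w3 : Wsum b 7 (ζ) (0) (3*t+1) = 0 := Wsum_eq_zero hω (by omega)
      have M0w4 : Wsum b 7 (ζ) (0) (2*t+2) = 0 := Wsum_eq_zero hω (by omega)
      have M0w5 : Wsum b 7 (ζ) (0) (2*t+1) = 0 := Wsum_eq_zero hω (by omega)
      have M0w6 : Wsum b 7 (ζ) (0) (t+2) = 0 := Wsum_eq_zero hω (by omega)
      have M0w7 : Wsum b 7 (ζ) (0) (t+1) = 0 := Wsum_eq_zero hω (by omega)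
      have M0w8 : Wsum b 7 (ζ) (0) (0) = ((7:ℕ):ℂ) := Wsum_eq_card hpb hζb (by omega)
      rw [M0w1, M0w2, M0w3, M0w4, M0w5, M0w6, M0w7, M0w8] at M0
      push_cast at M0
      have hzz : ((7:ℕ):ℂ) = 0 := by linear_combination -M0
      norm_num at hzz
    · -- t ≡ 1 (7)
      have M := qt_master hp hb hpsq hdvd hζp (t+1)
      have Mw1 : Wsum b 7 (ζ) (t+1) (4*t+3) = 0 := Wsum_eq_zero hω (by omega)
      have Mw2 : Wsum b 7 (ζ) (t+1) (3*t+2) = 0 := Wsum_eq_zero hω (by omega)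
      have Mw3 : Wsum b 7 (ζ) (t+1) (3*t+1) = 0 := Wsum_eq_zero hω (by omega)
      have Mw4 : Wsum b 7 (ζ) (t+1) (2*t+2) = 0 := Wsum_eq_zero hω (by omega)
      have Mw5 : Wsum b 7 (ζ) (t+1) (2*t+1) = 0 := Wsum_eq_zero hω (by omega)
      have Mw6 : Wsum b 7 (ζ) (t+1) (t+2) = 0 := Wsum_eq_zero hω (by omega)
      have Mw7 : Wsum b 7 (ζ) (t+1) (t+1) = ((7:ℕ):ℂ) := Wsum_eq_card hpb hζb (by omega)
      have Mw8 : Wsum b 7 (ζ) (t+1) (0) = 0 := Wsum_eq_zero hω (by omega)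
      rw [Mw1, Mw2, Mw3, Mw4, Mw5, Mw6, Mw7, Mw8] at M
      push_cast at M
      have hzz : ζ ^ (t+1) * ((7:ℕ):ℂ) = 0 := by linear_combination M
      rcases mul_eq_zero.mp hzz with hcc | hcc
      · exact hζ0 ((pow_eq_zero_iff (by omega : (t+1:ℕ) ≠ 0)).mp hcc)
      · norm_num at hcc
    · -- t ≡ 2 (7)
      have M := qt_master hp hb hpsq hdvd hζp (t+1)
      have Mw1 : Wsum b 7 (ζ) (t+1) (4*t+3) = 0 := Wsum_eq_zero hω (by omega)
      have Mw2 : Wsum b 7 (ζ) (t+1) (3*t+2) = 0 := Wsum_eq_zero hω (by omega)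
      have Mw3 : Wsum b 7 (ζ) (t+1) (3*t+1) = 0 := Wsum_eq_zero hω (by omega)
      have Mw4 : Wsum b 7 (ζ) (t+1) (2*t+2) = 0 := Wsum_eq_zero hω (by omega)
      have Mw5 : Wsum b 7 (ζ) (t+1) (2*t+1) = 0 := Wsum_eq_zero hω (by omega)
      have Mw6 : Wsum b 7 (ζ) (t+1) (t+2) = 0 := Wsum_eq_zero hω (by omega)
      have Mw7 : Wsum b 7 (ζ) (t+1) (t+1) = ((7:ℕ):ℂ) := Wsum_eq_card hpb hζb (by omega)
      have Mw8 : Wsum b 7 (ζ) (t+1) (0) = 0 := Wsum_eq_zero hω (by omega)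
      rw [Mw1, Mw2, Mw3, Mw4, Mw5, Mw6, Mw7, Mw8] at M
      push_cast at M
      have hzz : ζ ^ (t+1) * ((7:ℕ):ℂ) = 0 := by linear_combination M
      rcases mul_eq_zero.mp hzz with hcc | hcc
      · exact hζ0 ((pow_eq_zero_iff (by omega : (t+1:ℕ) ≠ 0)).mp hcc)
      · norm_num at hcc
    · -- t ≡ 3 (7)
      have M := qt_master hp hb hpsq hdvd hζp (t+2)
      have Mw1 : Wsum b 7 (ζ) (t+2) (4*t+3) = 0 := Wsum_eq_zero hω (by omega)
      have Mw2 : Wsum b 7 (ζ) (t+2) (3*t+2) = 0 := Wsum_eq_zero hω (by omega)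
      have Mw3 : Wsum b 7 (ζ) (t+2) (3*t+1) = 0 := Wsum_eq_zero hω (by omega)
      have Mw4 : Wsum b 7 (ζ) (t+2) (2*t+2) = 0 := Wsum_eq_zero hω (by omega)
      have Mw5 : Wsum b 7 (ζ) (t+2) (2*t+1) = 0 := Wsum_eq_zero hω (by omega)
      have Mw6 : Wsum b 7 (ζ) (t+2) (t+2) = ((7:ℕ):ℂ) := Wsum_eq_card hpb hζb (by omega)
      have Mw7 : Wsum b 7 (ζ) (t+2) (t+1) = 0 := Wsum_eq_zero hω (by omega)
      have Mw8 : Wsum b 7 (ζ) (t+2) (0) = 0 := Wsum_eq_zero hω (by omega)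
      rw [Mw1, Mw2, Mw3, Mw4, Mw5, Mw6, Mw7, Mw8] at M
      push_cast at M
      have hzz : ζ ^ (t+2) * ((7:ℕ):ℂ) = 0 := by linear_combination -M
      rcases mul_eq_zero.mp hzz with hcc | hcc
      · exact hζ0 ((pow_eq_zero_iff (by omega : (t+2:ℕ) ≠ 0)).mp hcc)
      · norm_num at hcc
    · -- t ≡ 4 (7)
      have M := qt_master hp hb hpsq hdvd hζp (2*t+1)
      have Mw1 : Wsum b 7 (ζ) (2*t+1) (4*t+3) = 0 := Wsum_eq_zero hω (by omega)
      have Mw2 : Wsum b 7 (ζ) (2*t+1) (3*t+2) = 0 := Wsum_eq_zero hω (by omega)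
      have Mw3 : Wsum b 7 (ζ) (2*t+1) (3*t+1) = 0 := Wsum_eq_zero hω (by omega)
      have Mw4 : Wsum b 7 (ζ) (2*t+1) (2*t+2) = 0 := Wsum_eq_zero hω (by omega)
      have Mw5 : Wsum b 7 (ζ) (2*t+1) (2*t+1) = ((7:ℕ):ℂ) := Wsum_eq_card hpb hζb (by omega)
      have Mw6 : Wsum b 7 (ζ) (2*t+1) (t+2) = 0 := Wsum_eq_zero hω (by omega)
      have Mw7 : Wsum b 7 (ζ) (2*t+1) (t+1) = 0 := Wsum_eq_zero hω (by omega)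
      have Mw8 : Wsum b 7 (ζ) (2*t+1) (0) = 0 := Wsum_eq_zero hω (by omega)
      rw [Mw1, Mw2, Mw3, Mw4, Mw5, Mw6, Mw7, Mw8] at M
      push_cast at M
      have hzz : ζ ^ (2*t+1) * ((7:ℕ):ℂ) = 0 := by linear_combination M
      rcases mul_eq_zero.mp hzz with hcc | hcc
      · exact hζ0 ((pow_eq_zero_iff (by omega : (2*t+1:ℕ) ≠ 0)).mp hcc)
      · norm_num at hcc
    · -- t ≡ 5 (7)
      have M := qt_master hp hb hpsq hdvd hζp (t+1)
      have Mw1 : Wsum b 7 (ζ) (t+1) (4*t+3) = 0 := Wsum_eq_zero hω (by omega)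
      have Mw2 : Wsum b 7 (ζ) (t+1) (3*t+2) = 0 := Wsum_eq_zero hω (by omega)
      have Mw3 : Wsum b 7 (ζ) (t+1) (3*t+1) = 0 := Wsum_eq_zero hω (by omega)
      have Mw4 : Wsum b 7 (ζ) (t+1) (2*t+2) = 0 := Wsum_eq_zero hω (by omega)
      have Mw5 : Wsum b 7 (ζ) (t+1) (2*t+1) = 0 := Wsum_eq_zero hω (by omega)
      have Mw6 : Wsum b 7 (ζ) (t+1) (t+2) = 0 := Wsum_eq_zero hω (by omega)
      have Mw7 : Wsum b 7 (ζ) (t+1) (t+1) = ((7:ℕ):ℂ) := Wsum_eq_card hpb hζb (by omega)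
      have Mw8 : Wsum b 7 (ζ) (t+1) (0) = 0 := Wsum_eq_zero hω (by omega)
      rw [Mw1, Mw2, Mw3, Mw4, Mw5, Mw6, Mw7, Mw8] at M
      push_cast at M
      have hzz : ζ ^ (t+1) * ((7:ℕ):ℂ) = 0 := by linear_combination M
      rcases mul_eq_zero.mp hzz with hcc | hcc
      · exact hζ0 ((pow_eq_zero_iff (by omega : (t+1:ℕ) ≠ 0)).mp hcc)
      · norm_num at hcc
    · -- t ≡ 6 (7)
      have M := qt_master hp hb hpsq hdvd hζp (t+2)
      have Mw1 : Wsum b 7 (ζ) (t+2) (4*t+3) = 0 := Wsum_eq_zero hω (by omega)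
      have Mw2 : Wsum b 7 (ζ) (t+2) (3*t+2) = 0 := Wsum_eq_zero hω (by omega)
      have Mw3 : Wsum b 7 (ζ) (t+2) (3*t+1) = 0 := Wsum_eq_zero hω (by omega)
      have Mw4 : Wsum b 7 (ζ) (t+2) (2*t+2) = 0 := Wsum_eq_zero hω (by omega)
      have Mw5 : Wsum b 7 (ζ) (t+2) (2*t+1) = 0 := Wsum_eq_zero hω (by omega)
      have Mw6 : Wsum b 7 (ζ) (t+2) (t+2) = ((7:ℕ):ℂ) := Wsum_eq_card hpb hζb (by omega)
      have Mw7 : Wsum b 7 (ζ) (t+2) (t+1) = 0 := Wsum_eq_zero hω (by omega)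
      have Mw8 : Wsum b 7 (ζ) (t+2) (0) = 0 := Wsum_eq_zero hω (by omega)
      rw [Mw1, Mw2, Mw3, Mw4, Mw5, Mw6, Mw7, Mw8] at M
      push_cast at M
      have hzz : ζ ^ (t+2) * ((7:ℕ):ℂ) = 0 := by linear_combination -M
      rcases mul_eq_zero.mp hzz with hcc | hcc
      · exact hζ0 ((pow_eq_zero_iff (by omega : (t+2:ℕ) ≠ 0)).mp hcc)
      · norm_num at hcc
  -- generic p ≥ 11
  have hp11 : 11 ≤ p := by
    by_contra hcon
    push_neg at hcon
    have h2 := hp.two_le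
    interval_cases p
    · exact hp2 rfl
    · exact hp3 rfl
    · exact absurd hp (by norm_num)
    · exact hp5 rfl
    · exact absurd hp (by norm_num)
    · exact hp7 rfl
    · exact absurd hp (by norm_num)
    · exact absurd hp (by norm_num)
    · exact absurd hp (by norm_num)
  haveI : Fact p.Prime := ⟨hp⟩
  have hpC : ((p:ℕ):ℂ) ≠ 0 := Nat.cast_ne_zero.mpr hp.pos.ne'
  have hne : ∀ k : ℕ, 0 < k → k < p → ((k:ℕ) : ZMod p) ≠ 0 := by
    intro k h1 h2 h0
    rw [ZMod.natCast_eq_zero_iff] at h0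
    exact absurd (Nat.le_of_dvd h1 h0) (by omega)
  have posdvd : ∀ s : ℕ, p ∣ s + s * (p-1) := by
    intro s
    have hps : s + s * (p-1) = p * s := by
      calc s + s * (p-1) = s * ((p-1) + 1) := by rw [Nat.mul_succ]; omega
      _ = p * s := by rw [show p - 1 + 1 = p by omega, Nat.mul_comm]
    rw [hps]
    exact dvd_mul_right p s
  have bridge : ∀ e s : ℕ, ¬ ((e:ZMod p) = (s:ZMod p)) → ¬ p ∣ (e + s*(p-1)) := by
    intro e s hne' hdv
    apply hne'
    have h0 : ((e + s*(p-1) : ℕ) : ZMod p) = 0 := (ZMod.natCast_eq_zero_iff _ _).mpr hdv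
    push_cast [Nat.cast_sub (by omega : 1 ≤ p)] at h0
    rw [ZMod.natCast_self] at h0
    linear_combination h0
  by_cases hA : (t : ZMod p) = 0
  · -- isolated exponent 0, s = 0
    have M := qt_master hp hb hpsq hdvd hζp (0)
    have w1 : Wsum b p ζ (0) (4*t+3) = 0 := Wsum_eq_zero hω (bridge _ _ (by
        intro h
        push_cast at h
        exact hne 3 (by norm_num) (by omega) (by push_cast; linear_combination h - 4*hA)))
    have w2 : Wsum b p ζ (0) (3*t+2) = 0 := Wsum_eq_zero hω (bridge _ _ (by
        intro h
        push_cast at h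
        exact hne 2 (by norm_num) (by omega) (by push_cast; linear_combination h - 3*hA)))
    have w3 : Wsum b p ζ (0) (3*t+1) = 0 := Wsum_eq_zero hω (bridge _ _ (by
        intro h
        push_cast at h
        exact hne 1 (by norm_num) (by omega) (by push_cast; linear_combination h - 3*hA)))
    have w4 : Wsum b p ζ (0) (2*t+2) = 0 := Wsum_eq_zero hω (bridge _ _ (by
        intro h
        push_cast at h
        exact hne 2 (by norm_num) (by omega) (by push_cast; linear_combination h - 2*hA)))
    have w5 : Wsum b p ζ (0) (2*t+1) = 0 := Wsum_eq_zero hω (bridge _ _ (by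
        intro h
        push_cast at h
        exact hne 1 (by norm_num) (by omega) (by push_cast; linear_combination h - 2*hA)))
    have w6 : Wsum b p ζ (0) (t+2) = 0 := Wsum_eq_zero hω (bridge _ _ (by
        intro h
        push_cast at h
        exact hne 2 (by norm_num) (by omega) (by push_cast; linear_combination h - hA)))
    have w7 : Wsum b p ζ (0) (t+1) = 0 := Wsum_eq_zero hω (bridge _ _ (by
        intro h
        push_cast at h
        exact hne 1 (by norm_num) (by omega) (by push_cast; linear_combination h - hA)))
    have w8 : Wsum b p ζ (0) (0) = ((p:ℕ):ℂ) := Wsum_eq_card hpb hζb (posdvd _)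
    rw [w1, w2, w3, w4, w5, w6, w7, w8] at M
    have hzz : ((p:ℕ):ℂ) = 0 := by linear_combination -M
    exact hpC hzz
  by_cases hB : (t : ZMod p) = -1
  · -- isolated exponent t+2, s = t+2
    have M := qt_master hp hb hpsq hdvd hζp (t+2)
    have w1 : Wsum b p ζ (t+2) (4*t+3) = 0 := Wsum_eq_zero hω (bridge _ _ (by
        intro h
        push_cast at h
        exact hne 2 (by norm_num) (by omega) (by push_cast; linear_combination -h + 3*hB)))
    have w2 : Wsum b p ζ (t+2) (3*t+2) = 0 := Wsum_eq_zero hω (bridge _ _ (by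
        intro h
        push_cast at h
        exact hne 2 (by norm_num) (by omega) (by push_cast; linear_combination -h + 2*hB)))
    have w3 : Wsum b p ζ (t+2) (3*t+1) = 0 := Wsum_eq_zero hω (bridge _ _ (by
        intro h
        push_cast at h
        exact hne 3 (by norm_num) (by omega) (by push_cast; linear_combination -h + 2*hB)))
    have w4 : Wsum b p ζ (t+2) (2*t+2) = 0 := Wsum_eq_zero hω (bridge _ _ (by
        intro h
        push_cast at h
        exact hne 1 (by norm_num) (by omega) (by push_cast; linear_combination -h + hB)))
    have w5 : Wsum b p ζ (t+2) (2*t+1) = 0 := Wsum_eq_zero hω (bridge _ _ (by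
        intro h
        push_cast at h
        exact hne 2 (by norm_num) (by omega) (by push_cast; linear_combination -h + hB)))
    have w6 : Wsum b p ζ (t+2) (t+2) = ((p:ℕ):ℂ) := Wsum_eq_card hpb hζb (posdvd _)
    have w7 : Wsum b p ζ (t+2) (t+1) = 0 := Wsum_eq_zero hω (bridge _ _ (by
        intro h
        push_cast at h
        exact hne 1 (by norm_num) (by omega) (by push_cast; linear_combination -h)))
    have w8 : Wsum b p ζ (t+2) (0) = 0 := Wsum_eq_zero hω (bridge _ _ (by
        intro h
        push_cast at h
        exact hne 1 (by norm_num) (by omega) (by push_cast; linear_combination -h - hB)))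
    rw [w1, w2, w3, w4, w5, w6, w7, w8] at M
    have hzz : ζ ^ (t+2) * ((p:ℕ):ℂ) = 0 := by linear_combination -M
    rcases mul_eq_zero.mp hzz with hcc | hcc
    · exact hζ0 ((pow_eq_zero_iff (by omega : (t+2:ℕ) ≠ 0)).mp hcc)
    · exact hpC hcc
  by_cases hC : 2*(t : ZMod p) = -1
  · -- isolated exponent t+2, s = t+2
    have M := qt_master hp hb hpsq hdvd hζp (t+2)
    have w1 : Wsum b p ζ (t+2) (4*t+3) = 0 := Wsum_eq_zero hω (bridge _ _ (by
        intro h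
        push_cast at h
        exact hne 1 (by norm_num) (by omega) (by push_cast; linear_combination -2*h + 3*hC)))
    have w2 : Wsum b p ζ (t+2) (3*t+2) = 0 := Wsum_eq_zero hω (bridge _ _ (by
        intro h
        push_cast at h
        exact hne 1 (by norm_num) (by omega) (by push_cast; linear_combination -h + hC)))
    have w3 : Wsum b p ζ (t+2) (3*t+1) = 0 := Wsum_eq_zero hω (bridge _ _ (by
        intro h
        push_cast at h
        exact hne 2 (by norm_num) (by omega) (by push_cast; linear_combination -h + hC)))
    have w4 : Wsum b p ζ (t+2) (2*t+2) = 0 := Wsum_eq_zero hω (bridge _ _ (by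
        intro h
        push_cast at h
        exact hne 1 (by norm_num) (by omega) (by push_cast; linear_combination -2*h + hC)))
    have w5 : Wsum b p ζ (t+2) (2*t+1) = 0 := Wsum_eq_zero hω (bridge _ _ (by
        intro h
        push_cast at h
        exact hne 3 (by norm_num) (by omega) (by push_cast; linear_combination -2*h + hC)))
    have w6 : Wsum b p ζ (t+2) (t+2) = ((p:ℕ):ℂ) := Wsum_eq_card hpb hζb (posdvd _)
    have w7 : Wsum b p ζ (t+2) (t+1) = 0 := Wsum_eq_zero hω (bridge _ _ (by
        intro h
        push_cast at h
        exact hne 1 (by norm_num) (by omega) (by push_cast; linear_combination -h)))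
    have w8 : Wsum b p ζ (t+2) (0) = 0 := Wsum_eq_zero hω (bridge _ _ (by
        intro h
        push_cast at h
        exact hne 3 (by norm_num) (by omega) (by push_cast; linear_combination -2*h - hC)))
    rw [w1, w2, w3, w4, w5, w6, w7, w8] at M
    have hzz : ζ ^ (t+2) * ((p:ℕ):ℂ) = 0 := by linear_combination -M
    rcases mul_eq_zero.mp hzz with hcc | hcc
    · exact hζ0 ((pow_eq_zero_iff (by omega : (t+2:ℕ) ≠ 0)).mp hcc)
    · exact hpC hcc
  by_cases hD : 3*(t : ZMod p) = -2
  · -- isolated exponent t+2, s = t+2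
    have M := qt_master hp hb hpsq hdvd hζp (t+2)
    have w1 : Wsum b p ζ (t+2) (4*t+3) = 0 := Wsum_eq_zero hω (bridge _ _ (by
        intro h
        push_cast at h
        exact hne 1 (by norm_num) (by omega) (by push_cast; linear_combination -h + hD)))
    have w2 : Wsum b p ζ (t+2) (3*t+2) = 0 := Wsum_eq_zero hω (bridge _ _ (by
        intro h
        push_cast at h
        exact hne 4 (by norm_num) (by omega) (by push_cast; linear_combination -3*h + 2*hD)))
    have w3 : Wsum b p ζ (t+2) (3*t+1) = 0 := Wsum_eq_zero hω (bridge _ _ (by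
        intro h
        push_cast at h
        exact hne 7 (by norm_num) (by omega) (by push_cast; linear_combination -3*h + 2*hD)))
    have w4 : Wsum b p ζ (t+2) (2*t+2) = 0 := Wsum_eq_zero hω (bridge _ _ (by
        intro h
        push_cast at h
        exact hne 2 (by norm_num) (by omega) (by push_cast; linear_combination -3*h + hD)))
    have w5 : Wsum b p ζ (t+2) (2*t+1) = 0 := Wsum_eq_zero hω (bridge _ _ (by
        intro h
        push_cast at h
        exact hne 5 (by norm_num) (by omega) (by push_cast; linear_combination -3*h + hD)))
    have w6 : Wsum b p ζ (t+2) (t+2) = ((p:ℕ):ℂ) := Wsum_eq_card hpb hζb (posdvd _)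
    have w7 : Wsum b p ζ (t+2) (t+1) = 0 := Wsum_eq_zero hω (bridge _ _ (by
        intro h
        push_cast at h
        exact hne 1 (by norm_num) (by omega) (by push_cast; linear_combination -h)))
    have w8 : Wsum b p ζ (t+2) (0) = 0 := Wsum_eq_zero hω (bridge _ _ (by
        intro h
        push_cast at h
        exact hne 4 (by norm_num) (by omega) (by push_cast; linear_combination -3*h - hD)))
    rw [w1, w2, w3, w4, w5, w6, w7, w8] at M
    have hzz : ζ ^ (t+2) * ((p:ℕ):ℂ) = 0 := by linear_combination -M
    rcases mul_eq_zero.mp hzz with hcc | hcc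
    · exact hζ0 ((pow_eq_zero_iff (by omega : (t+2:ℕ) ≠ 0)).mp hcc)
    · exact hpC hcc
  -- final branch: isolated exponent t+1, s = t+1
  have M := qt_master hp hb hpsq hdvd hζp (t+1)
  have w1 : Wsum b p ζ (t+1) (4*t+3) = 0 := Wsum_eq_zero hω (bridge _ _ (by
      intro h
      push_cast at h
      exact hD (by linear_combination h)))
  have w2 : Wsum b p ζ (t+1) (3*t+2) = 0 := Wsum_eq_zero hω (bridge _ _ (by
      intro h
      push_cast at h
      exact hC (by linear_combination h)))
  have w3 : Wsum b p ζ (t+1) (3*t+1) = 0 := Wsum_eq_zero hω (bridge _ _ (by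
      intro h
      push_cast at h
      have h2 : (2:ZMod p) * (t:ZMod p) = 0 := by linear_combination h
      rcases mul_eq_zero.mp h2 with h' | h'
      · exact hne 2 (by norm_num) (by omega) (by push_cast; linear_combination h')
      · exact hA h'))
  have w4 : Wsum b p ζ (t+1) (2*t+2) = 0 := Wsum_eq_zero hω (bridge _ _ (by
      intro h
      push_cast at h
      exact hB (by linear_combination h)))
  have w5 : Wsum b p ζ (t+1) (2*t+1) = 0 := Wsum_eq_zero hω (bridge _ _ (by
      intro h
      push_cast at h
      exact hA (by linear_combination h)))
  have w6 : Wsum b p ζ (t+1) (t+2) = 0 := Wsum_eq_zero hω (bridge _ _ (by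
      intro h
      push_cast at h
      exact hne 1 (by norm_num) (by omega) (by push_cast; linear_combination h)))
  have w7 : Wsum b p ζ (t+1) (t+1) = ((p:ℕ):ℂ) := Wsum_eq_card hpb hζb (posdvd _)
  have w8 : Wsum b p ζ (t+1) (0) = 0 := Wsum_eq_zero hω (bridge _ _ (by
      intro h
      push_cast at h
      exact hB (by linear_combination -h)))
  rw [w1, w2, w3, w4, w5, w6, w7, w8] at M
  have hzz : ζ ^ (t+1) * ((p:ℕ):ℂ) = 0 := by linear_combination M
  rcases mul_eq_zero.mp hzz with hcc | hcc
  · exact hζ0 ((pow_eq_zero_iff (by omega : (t+1:ℕ) ≠ 0)).mp hcc)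
  · exact hpC hcc
end

section
/- Let t ≥ 3 be an odd integer and let p ≥ 11 be a prime. Then neither Φ_p(y) nor Φ_{2p}(y) divides Q_t(y) in ℤ[y]. -/
open Finset Polynomial

private lemma iterate_derivative_add' {R : Type*} [CommSemiring R] (k : ℕ) (f g : R[X]) :
    derivative^[k] (f + g) = derivative^[k] f + derivative^[k] g := by
  induction k generalizing f g with
  | zero => rfl
  | succ k ih => simp only [Function.iterate_succ_apply, derivative_add, ih]

private lemma derivEval {R : Type*} [CommRing R] (F : R[X]) (a : R) (k N : ℕ) (hkN : k < N)
    (h : (X - C a) ^ N ∣ F) : (derivative^[k] F).eval a = 0 := by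
  obtain ⟨g, hg⟩ := (dvd_pow_self (X - C a) (by omega : N - k ≠ 0)).trans
    (Polynomial.pow_sub_dvd_iterate_derivative_of_pow_dvd k h)
  rw [hg]
  simp

private lemma dF2 (n : ℕ) : Nat.descFactorial (n + 2) 2 = (n + 1) * (n + 2) := by
  rw [Nat.descFactorial_succ, Nat.descFactorial_one, show n + 2 - 1 = n + 1 from by omega]

private lemma dF3 (n : ℕ) : Nat.descFactorial (n + 3) 3 = (n + 1) * ((n + 2) * (n + 3)) := by
  rw [Nat.descFactorial_succ, Nat.descFactorial_succ, Nat.descFactorial_one,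
    show n + 3 - 2 = n + 1 from by omega, show n + 3 - 1 = n + 2 from by omega]

private lemma dF4 (n : ℕ) :
    Nat.descFactorial (n + 4) 4 = (n + 1) * ((n + 2) * ((n + 3) * (n + 4))) := by
  rw [Nat.descFactorial_succ, Nat.descFactorial_succ, Nat.descFactorial_succ,
    Nat.descFactorial_one, show n + 4 - 3 = n + 1 from by omega,
    show n + 4 - 2 = n + 2 from by omega, show n + 4 - 1 = n + 3 from by omega]

/-- For odd `t ≥ 3` and a prime `p ≥ 11`, neither `Φ_p(y)` nor
`Φ_{2p}(y)` divides `Q_t(y)`. -/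
theorem cyclotomic_p_and_2p_not_dvd_Qt
    (t : ℕ) (ht3 : 3 ≤ t) (htodd : Odd t) (p : ℕ) (hp : p.Prime)
    (hp11 : 11 ≤ p) :
    ¬ Polynomial.cyclotomic p ℤ ∣ Qt t ∧
      ¬ Polynomial.cyclotomic (2 * p) ℤ ∣ Qt t := by
  haveI hpf : Fact p.Prime := ⟨hp⟩
  obtain ⟨m, rfl⟩ : ∃ m, t = 2 * m + 3 := by
    obtain ⟨j, hj⟩ := htodd; exact ⟨j - 1, by omega⟩
  have hmap : (Qt (2 * m + 3)).map (Int.castRingHom (ZMod p)) =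
      (X ^ (8 * m + 15) - X ^ (6 * m + 11) + X ^ (6 * m + 10) - X ^ (4 * m + 8)
        + X ^ (4 * m + 7) - X ^ (2 * m + 5) + X ^ (2 * m + 4) - 1 : (ZMod p)[X]) := by
    simp only [Qt, Polynomial.map_sub, Polynomial.map_add, Polynomial.map_pow,
      Polynomial.map_X, Polynomial.map_one,
      show 4 * (2 * m + 3) + 3 = 8 * m + 15 from by ring,
      show 3 * (2 * m + 3) + 2 = 6 * m + 11 from by ring,
      show 3 * (2 * m + 3) + 1 = 6 * m + 10 from by ring,
      show 2 * (2 * m + 3) + 2 = 4 * m + 8 from by ring,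
      show 2 * (2 * m + 3) + 1 = 4 * m + 7 from by ring,
      show 2 * m + 3 + 2 = 2 * m + 5 from by ring,
      show 2 * m + 3 + 1 = 2 * m + 4 from by ring]
  set u : ZMod p := (m : ZMod p) with hu
  constructor
  · -- Φ_p case
    intro hdvd
    have hQ : cyclotomic p (ZMod p) ∣ (Qt (2 * m + 3)).map (Int.castRingHom (ZMod p)) := by
      simpa only [map_cyclotomic] using Polynomial.map_dvd (Int.castRingHom (ZMod p)) hdvd
    have hcyc : cyclotomic p (ZMod p) = (X - C (1 : ZMod p)) ^ (p - 1) := by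
      have h2 := cyclotomic_mul_prime_eq_pow_of_not_dvd (ZMod p) (n := 1) hp.not_dvd_one
      rw [one_mul, cyclotomic_one] at h2
      rw [h2, map_one]
    rw [hcyc, hmap] at hQ
    have h1 := derivEval _ _ 1 (p - 1) (by omega) hQ
    have h3 := derivEval _ _ 3 (p - 1) (by omega) hQ
    rw [show 8 * m + 15 = 8 * m + 12 + 3 from by ring,
      show 6 * m + 11 = 6 * m + 8 + 3 from by ring,
      show 6 * m + 10 = 6 * m + 7 + 3 from by ring,
      show 4 * m + 8 = 4 * m + 5 + 3 from by ring,
      show 4 * m + 7 = 4 * m + 4 + 3 from by ring,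
      show 2 * m + 5 = 2 * m + 2 + 3 from by ring,
      show 2 * m + 4 = 2 * m + 1 + 3 from by ring] at h3
    simp only [iterate_derivative_sub, iterate_derivative_add', iterate_derivative_X_pow_eq_C_mul,
      iterate_derivative_one (by norm_num : 0 < 1), iterate_derivative_one (by norm_num : 0 < 3),
      Nat.add_sub_cancel, Nat.descFactorial_one, dF2, dF3, dF4, eval_sub, eval_add, eval_mul,
      eval_C, eval_pow, eval_X, eval_zero, one_pow, mul_one] at h1 h3
    push_cast at h1 h3
    have h24 : (24 : ZMod p) = 0 := by
      linear_combination (4 : ZMod p) * h3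
        - (64 * (2 * u + 3) ^ 2 + 54 * (2 * u + 3) + 26) * h1
    have hdvd24 : p ∣ 24 := by
      have : ((24 : ℕ) : ZMod p) = 0 := by exact_mod_cast h24
      exact (ZMod.natCast_eq_zero_iff 24 p).mp this
    have hle := Nat.le_of_dvd (by norm_num) hdvd24
    interval_cases p <;> first | omega | exact absurd hp (by norm_num)
  · -- Φ_{2p} case
    intro hdvd
    have hQ : cyclotomic (2 * p) (ZMod p) ∣ (Qt (2 * m + 3)).map (Int.castRingHom (ZMod p)) := by
      simpa only [map_cyclotomic] using Polynomial.map_dvd (Int.castRingHom (ZMod p)) hdvd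
    have hcyc : cyclotomic (2 * p) (ZMod p) = (X - C (-1 : ZMod p)) ^ (p - 1) := by
      have h2 := cyclotomic_mul_prime_eq_pow_of_not_dvd (ZMod p) (p := p) (n := 2)
        (fun h => by have := Nat.le_of_dvd (by norm_num) h; omega)
      rw [cyclotomic_two] at h2
      rw [h2, map_neg, map_one, sub_neg_eq_add]
    rw [hcyc, hmap] at hQ
    have h2 := derivEval _ _ 2 (p - 1) (by omega) hQ
    have h4 := derivEval _ _ 4 (p - 1) (by omega) hQ
    rw [show 8 * m + 15 = 8 * m + 13 + 2 from by ring,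
      show 6 * m + 11 = 6 * m + 9 + 2 from by ring,
      show 6 * m + 10 = 6 * m + 8 + 2 from by ring,
      show 4 * m + 8 = 4 * m + 6 + 2 from by ring,
      show 4 * m + 7 = 4 * m + 5 + 2 from by ring,
      show 2 * m + 5 = 2 * m + 3 + 2 from by ring,
      show 2 * m + 4 = 2 * m + 2 + 2 from by ring] at h2
    rw [show 8 * m + 15 = 8 * m + 11 + 4 from by ring,
      show 6 * m + 11 = 6 * m + 7 + 4 from by ring,
      show 6 * m + 10 = 6 * m + 6 + 4 from by ring,
      show 4 * m + 8 = 4 * m + 4 + 4 from by ring,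
      show 4 * m + 7 = 4 * m + 3 + 4 from by ring,
      show 2 * m + 5 = 2 * m + 1 + 4 from by ring,
      show 2 * m + 4 = 2 * m + 4 from by ring] at h4
    have o1 : ((-1 : ZMod p)) ^ (8 * m + 13) = -1 := Odd.neg_one_pow ⟨4 * m + 6, by ring⟩
    have o2 : ((-1 : ZMod p)) ^ (6 * m + 9) = -1 := Odd.neg_one_pow ⟨3 * m + 4, by ring⟩
    have o3 : ((-1 : ZMod p)) ^ (6 * m + 8) = 1 := Even.neg_one_pow ⟨3 * m + 4, by ring⟩
    have o4 : ((-1 : ZMod p)) ^ (4 * m + 6) = 1 := Even.neg_one_pow ⟨2 * m + 3, by ring⟩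
    have o5 : ((-1 : ZMod p)) ^ (4 * m + 5) = -1 := Odd.neg_one_pow ⟨2 * m + 2, by ring⟩
    have o6 : ((-1 : ZMod p)) ^ (2 * m + 3) = -1 := Odd.neg_one_pow ⟨m + 1, by ring⟩
    have o7 : ((-1 : ZMod p)) ^ (2 * m + 2) = 1 := Even.neg_one_pow ⟨m + 1, by ring⟩
    have o8 : ((-1 : ZMod p)) ^ (8 * m + 11) = -1 := Odd.neg_one_pow ⟨4 * m + 5, by ring⟩
    have o9 : ((-1 : ZMod p)) ^ (6 * m + 7) = -1 := Odd.neg_one_pow ⟨3 * m + 3, by ring⟩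
    have o10 : ((-1 : ZMod p)) ^ (6 * m + 6) = 1 := Even.neg_one_pow ⟨3 * m + 3, by ring⟩
    have o11 : ((-1 : ZMod p)) ^ (4 * m + 4) = 1 := Even.neg_one_pow ⟨2 * m + 2, by ring⟩
    have o12 : ((-1 : ZMod p)) ^ (4 * m + 3) = -1 := Odd.neg_one_pow ⟨2 * m + 1, by ring⟩
    have o13 : ((-1 : ZMod p)) ^ (2 * m + 1) = -1 := Odd.neg_one_pow ⟨m, by ring⟩
    have o14 : ((-1 : ZMod p)) ^ (2 * m) = 1 := Even.neg_one_pow ⟨m, by ring⟩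
    simp only [iterate_derivative_sub, iterate_derivative_add', iterate_derivative_X_pow_eq_C_mul,
      iterate_derivative_one (by norm_num : 0 < 2), iterate_derivative_one (by norm_num : 0 < 4),
      Nat.add_sub_cancel, Nat.descFactorial_one, dF2, dF3, dF4, eval_sub, eval_add, eval_mul,
      eval_C, eval_pow, eval_X, eval_zero, o1, o2, o3, o4, o5, o6, o7, o8, o9, o10, o11, o12,
      o13, o14, mul_one, mul_neg_one] at h2 h4
    push_cast at h2 h4
    have h20 : (20 : ZMod p) = 0 := by
      linear_combination (-(558 : ZMod p) * (2 * u + 3) ^ 3 - 1511 * (2 * u + 3) ^ 2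
        - 267 * (2 * u + 3) - 5) * h2 + (18 * (2 * u + 3) + 47) * h4
    have hdvd20 : p ∣ 20 := by
      have : ((20 : ℕ) : ZMod p) = 0 := by exact_mod_cast h20
      exact (ZMod.natCast_eq_zero_iff 20 p).mp this
    have hle := Nat.le_of_dvd (by norm_num) hdvd20
    interval_cases p <;> first | omega | exact absurd hp (by norm_num)
end

section
/- Let t be a positive integer with t ≢ 1 (mod 10). Then for every b ∈ {3, 5, 6, 7, 10, 14, 15, 21, 30, 42}, the cyclotomic polynomial Φ_b(y) does not divide Q_t(y) in ℤ[y]. -/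
open Finset Polynomial

lemma key {b : ℕ} [NeZero ((b : ℕ) : ZMod 211)] {ζ : ZMod 211}
    (hζ : IsPrimitiveRoot ζ b) {t : ℕ} (h : Polynomial.cyclotomic b ℤ ∣ Qt t) :
    (ζ ^ (t % b)) ^ 4 * ζ ^ 3 - (ζ ^ (t % b)) ^ 3 * ζ ^ 2 + (ζ ^ (t % b)) ^ 3 * ζ
      - (ζ ^ (t % b)) ^ 2 * ζ ^ 2 + (ζ ^ (t % b)) ^ 2 * ζ
      - ζ ^ (t % b) * ζ ^ 2 + ζ ^ (t % b) * ζ - 1 = 0 := by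
  haveI : Fact (Nat.Prime 211) := ⟨by norm_num⟩
  have hmap : cyclotomic b (ZMod 211) ∣ (Qt t).map (Int.castRingHom (ZMod 211)) := by
    have := Polynomial.map_dvd (Int.castRingHom (ZMod 211)) h
    rwa [Polynomial.map_cyclotomic] at this
  have hroot : Polynomial.IsRoot (cyclotomic b (ZMod 211)) ζ :=
    (Polynomial.isRoot_cyclotomic_iff).mpr hζ
  have hQ := hroot.dvd hmap
  have hb1 : ζ ^ b = 1 := hζ.pow_eq_one
  have ht : ζ ^ t = ζ ^ (t % b) := pow_eq_pow_mod t hb1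
  simp only [Qt, IsRoot, Polynomial.map_sub, Polynomial.map_add, Polynomial.map_pow,
    Polynomial.map_one, Polynomial.map_X, eval_sub, eval_add, eval_pow, eval_one, eval_X] at hQ
  rw [show (4*t+3 : ℕ) = t*4+3 by ring, show (3*t+2 : ℕ) = t*3+2 by ring,
    show (3*t+1 : ℕ) = t*3+1 by ring, show (2*t+2 : ℕ) = t*2+2 by ring,
    show (2*t+1 : ℕ) = t*2+1 by ring] at hQ
  simp only [pow_add, pow_mul, pow_one, ht] at hQ
  rw [← hQ]

/-- For a positive integer `t` with `t ≢ 1 (mod 10)` and every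
`b ∈ {3, 5, 6, 7, 10, 14, 15, 21, 30, 42}`, the cyclotomic polynomial `Φ_b(y)`
does not divide `Q_t(y)`. -/
theorem cyclotomic_small_b_not_dvd_Qt
    (t : ℕ) (ht : 0 < t) (ht10 : t % 10 ≠ 1) :
    ∀ b ∈ ({3, 5, 6, 7, 10, 14, 15, 21, 30, 42} : Finset ℕ),
      ¬ Polynomial.cyclotomic b ℤ ∣ Qt t := by
  intro b hb
  fin_cases hb
  · intro h
    haveI : NeZero ((3 : ℕ) : ZMod 211) := ⟨by decide⟩
    have hprim : IsPrimitiveRoot (196 : ZMod 211) 3 := by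
      have ho : orderOf (196 : ZMod 211) = 3 := by
        rw [orderOf_eq_iff (by norm_num)]
        exact ⟨by decide, by decide⟩
      exact ho ▸ IsPrimitiveRoot.orderOf _
    have hQ := key hprim h
    obtain ⟨r, hrb, hreq⟩ : ∃ r, r < 3 ∧ t % 3 = r := ⟨_, Nat.mod_lt _ (by norm_num), rfl⟩
    rw [hreq] at hQ
    interval_cases r <;> first | omega | (revert hQ; decide)
  · intro h
    haveI : NeZero ((5 : ℕ) : ZMod 211) := ⟨by decide⟩
    have hprim : IsPrimitiveRoot (107 : ZMod 211) 5 := by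
      have ho : orderOf (107 : ZMod 211) = 5 := by
        rw [orderOf_eq_iff (by norm_num)]
        exact ⟨by decide, by decide⟩
      exact ho ▸ IsPrimitiveRoot.orderOf _
    have hQ := key hprim h
    obtain ⟨r, hrb, hreq⟩ : ∃ r, r < 5 ∧ t % 5 = r := ⟨_, Nat.mod_lt _ (by norm_num), rfl⟩
    rw [hreq] at hQ
    interval_cases r <;> first | omega | (revert hQ; decide)
  · intro h
    haveI : NeZero ((6 : ℕ) : ZMod 211) := ⟨by decide⟩
    have hprim : IsPrimitiveRoot (197 : ZMod 211) 6 := by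
      have ho : orderOf (197 : ZMod 211) = 6 := by
        rw [orderOf_eq_iff (by norm_num)]
        exact ⟨by decide, by decide⟩
      exact ho ▸ IsPrimitiveRoot.orderOf _
    have hQ := key hprim h
    obtain ⟨r, hrb, hreq⟩ : ∃ r, r < 6 ∧ t % 6 = r := ⟨_, Nat.mod_lt _ (by norm_num), rfl⟩
    rw [hreq] at hQ
    interval_cases r <;> first | omega | (revert hQ; decide)
  · intro h
    haveI : NeZero ((7 : ℕ) : ZMod 211) := ⟨by decide⟩
    have hprim : IsPrimitiveRoot (171 : ZMod 211) 7 := by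
      have ho : orderOf (171 : ZMod 211) = 7 := by
        rw [orderOf_eq_iff (by norm_num)]
        exact ⟨by decide, by decide⟩
      exact ho ▸ IsPrimitiveRoot.orderOf _
    have hQ := key hprim h
    obtain ⟨r, hrb, hreq⟩ : ∃ r, r < 7 ∧ t % 7 = r := ⟨_, Nat.mod_lt _ (by norm_num), rfl⟩
    rw [hreq] at hQ
    interval_cases r <;> first | omega | (revert hQ; decide)
  · intro h
    haveI : NeZero ((10 : ℕ) : ZMod 211) := ⟨by decide⟩
    have hprim : IsPrimitiveRoot (23 : ZMod 211) 10 := by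
      have ho : orderOf (23 : ZMod 211) = 10 := by
        rw [orderOf_eq_iff (by norm_num)]
        exact ⟨by decide, by decide⟩
      exact ho ▸ IsPrimitiveRoot.orderOf _
    have hQ := key hprim h
    obtain ⟨r, hrb, hreq⟩ : ∃ r, r < 10 ∧ t % 10 = r := ⟨_, Nat.mod_lt _ (by norm_num), rfl⟩
    rw [hreq] at hQ ht10
    interval_cases r <;> first | omega | (revert hQ; decide)
  · intro h
    haveI : NeZero ((14 : ℕ) : ZMod 211) := ⟨by decide⟩
    have hprim : IsPrimitiveRoot (63 : ZMod 211) 14 := by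
      have ho : orderOf (63 : ZMod 211) = 14 := by
        rw [orderOf_eq_iff (by norm_num)]
        exact ⟨by decide, by decide⟩
      exact ho ▸ IsPrimitiveRoot.orderOf _
    have hQ := key hprim h
    obtain ⟨r, hrb, hreq⟩ : ∃ r, r < 14 ∧ t % 14 = r := ⟨_, Nat.mod_lt _ (by norm_num), rfl⟩
    rw [hreq] at hQ
    interval_cases r <;> first | omega | (revert hQ; decide)
  · intro h
    haveI : NeZero ((15 : ℕ) : ZMod 211) := ⟨by decide⟩
    have hprim : IsPrimitiveRoot (137 : ZMod 211) 15 := by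
      have ho : orderOf (137 : ZMod 211) = 15 := by
        rw [orderOf_eq_iff (by norm_num)]
        exact ⟨by decide, by decide⟩
      exact ho ▸ IsPrimitiveRoot.orderOf _
    have hQ := key hprim h
    obtain ⟨r, hrb, hreq⟩ : ∃ r, r < 15 ∧ t % 15 = r := ⟨_, Nat.mod_lt _ (by norm_num), rfl⟩
    rw [hreq] at hQ
    interval_cases r <;> first | omega | (revert hQ; decide)
  · intro h
    haveI : NeZero ((21 : ℕ) : ZMod 211) := ⟨by decide⟩
    have hprim : IsPrimitiveRoot (180 : ZMod 211) 21 := by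
      have ho : orderOf (180 : ZMod 211) = 21 := by
        rw [orderOf_eq_iff (by norm_num)]
        exact ⟨by decide, by decide⟩
      exact ho ▸ IsPrimitiveRoot.orderOf _
    have hQ := key hprim h
    obtain ⟨r, hrb, hreq⟩ : ∃ r, r < 21 ∧ t % 21 = r := ⟨_, Nat.mod_lt _ (by norm_num), rfl⟩
    rw [hreq] at hQ
    interval_cases r <;> first | omega | (revert hQ; decide)
  · intro h
    haveI : NeZero ((30 : ℕ) : ZMod 211) := ⟨by decide⟩
    have hprim : IsPrimitiveRoot (128 : ZMod 211) 30 := by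
      have ho : orderOf (128 : ZMod 211) = 30 := by
        rw [orderOf_eq_iff (by norm_num)]
        exact ⟨by decide, by decide⟩
      exact ho ▸ IsPrimitiveRoot.orderOf _
    have hQ := key hprim h
    obtain ⟨r, hrb, hreq⟩ : ∃ r, r < 30 ∧ t % 30 = r := ⟨_, Nat.mod_lt _ (by norm_num), rfl⟩
    rw [hreq] at hQ
    interval_cases r <;> first | omega | (revert hQ; decide)
  · intro h
    haveI : NeZero ((42 : ℕ) : ZMod 211) := ⟨by decide⟩
    have hprim : IsPrimitiveRoot (32 : ZMod 211) 42 := by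
      have ho : orderOf (32 : ZMod 211) = 42 := by
        rw [orderOf_eq_iff (by norm_num)]
        exact ⟨by decide, by decide⟩
      exact ho ▸ IsPrimitiveRoot.orderOf _
    have hQ := key hprim h
    obtain ⟨r, hrb, hreq⟩ : ∃ r, r < 42 ∧ t % 42 = r := ⟨_, Nat.mod_lt _ (by norm_num), rfl⟩
    rw [hreq] at hQ
    interval_cases r <;> first | omega | (revert hQ; decide)
end

section
/- Let t be a positive integer and let n ≥ 4t + 4 be an even integer with gcd(n/2, t) = 1. Then there exists a set S ⊆ {1, …, n/2 − 1} such that the circulant graph Circ(n, S) is a nut graph and is 4t-regular. -/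
open Finset Polynomial

namespace Nut13

lemma pow_mod_eq {M : Type*} [Monoid M] {n : ℕ} {c : M} (hc : c ^ n = 1) (A : ℕ) :
    c ^ (A % n) = c ^ A := by
  conv_rhs => rw [← Nat.mod_add_div A n, pow_add, pow_mul, hc, one_pow, mul_one]

lemma cast_inj_of_lt {n a b : ℕ} [NeZero n] (ha : a < n) (hb : b < n) (h : (a : ZMod n) = b) :
    a = b := by
  have h2 := congrArg ZMod.val h
  rwa [ZMod.val_cast_of_lt ha, ZMod.val_cast_of_lt hb] at h2

lemma cast_ne_zero_of {n s : ℕ} [NeZero n] (h0 : 0 < s) (h1 : s < n) : (s : ZMod n) ≠ 0 := by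
  intro h
  have h2 := (ZMod.natCast_eq_zero_iff s n).mp h
  exact absurd (Nat.le_of_dvd h0 h2) (by omega)

lemma neg_cast_eq {n s : ℕ} (hs : s ≤ n) : -(s : ZMod n) = ((n - s : ℕ) : ZMod n) := by
  have h : ((n - s : ℕ) : ZMod n) = (n : ZMod n) - (s : ZMod n) := by
    push_cast [Nat.cast_sub hs]; ring
  rw [h, ZMod.natCast_self, zero_sub]

section Main

variable {m t a : ℕ}

/-- membership bounds -/
lemma S_mem (hat : a + 2*t + 1 ≤ m) {s : ℕ} (hs : s ∈ Finset.Icc (a+1) (a+2*t)) :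
    0 < s ∧ s + 1 ≤ m := by
  rw [Finset.mem_Icc] at hs; omega


lemma adj_iff (hat : a + 2*t + 1 ≤ m) (k i : Fin (2*m)) :
    (circ (2*m) (Finset.Icc (a+1) (a+2*t))).Adj k i ↔
      ∃ s ∈ Finset.Icc (a+1) (a+2*t),
        ((i.val : ZMod (2*m)) = (k.val : ZMod (2*m)) + (s : ZMod (2*m)) ∨
         (i.val : ZMod (2*m)) = (k.val : ZMod (2*m)) - (s : ZMod (2*m))) := by
  haveI : NeZero (2*m) := ⟨by omega⟩
  constructor
  · rintro ⟨hne, s, hs, h | h⟩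
    · exact ⟨s, hs, Or.inr (by linear_combination -h)⟩
    · exact ⟨s, hs, Or.inl (by linear_combination h)⟩
  · rintro ⟨s, hs, h⟩
    obtain ⟨hs0, hsm⟩ := S_mem hat hs
    have hsne : (s : ZMod (2*m)) ≠ 0 := cast_ne_zero_of hs0 (by omega)
    have hki : k ≠ i := by
      rintro rfl
      rcases h with h | h
      · exact hsne (by linear_combination -h)
      · exact hsne (by linear_combination h)
    refine ⟨hki, s, hs, ?_⟩
    rcases h with h | h
    · exact Or.inr (by linear_combination h)
    · exact Or.inl (by linear_combination -h)

/-- the `ZMod n ≃ Fin n` equivalence -/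
def zarr (n : ℕ) [NeZero n] : ZMod n ≃ Fin n :=
  ⟨fun z => ⟨z.val, ZMod.val_lt z⟩, fun i => (i.val : ZMod n),
   fun z => by simp [ZMod.natCast_val, ZMod.cast_id],
   fun i => by ext; simp [ZMod.val_cast_of_lt i.isLt]⟩

lemma zarr_val (n : ℕ) [NeZero n] (z : ZMod n) : (((zarr n z).val : ℕ) : ZMod n) = z := by
  show ((z.val : ℕ) : ZMod n) = z
  simp [ZMod.natCast_val, ZMod.cast_id]

/-- The master neighbour-sum lemma. -/
lemma sum_adj {M : Type*} [AddCommMonoid M] (hat : a + 2*t + 1 ≤ m)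
    (g : ZMod (2*m) → M) (k : Fin (2*m))
    [inst : DecidablePred ((circ (2*m) (Finset.Icc (a+1) (a+2*t))).Adj k)] :
    (∑ i, if (circ (2*m) (Finset.Icc (a+1) (a+2*t))).Adj k i then g (i.val : ZMod (2*m)) else 0)
      = ∑ s ∈ Finset.Icc (a+1) (a+2*t),
          (g ((k.val : ZMod (2*m)) + (s : ZMod (2*m))) + g ((k.val : ZMod (2*m)) - (s : ZMod (2*m)))) := by
  haveI : NeZero (2*m) := ⟨by omega⟩
  have hmem : ∀ s ∈ Finset.Icc (a+1) (a+2*t), 0 < s ∧ s + 1 ≤ m := fun s hs => S_mem hat hs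
  rw [← Equiv.sum_comp (zarr (2*m))
    (fun i => if (circ (2*m) (Finset.Icc (a+1) (a+2*t))).Adj k i then g (i.val : ZMod (2*m)) else 0)]
  have step1 : ∀ z : ZMod (2*m),
      (if (circ (2*m) (Finset.Icc (a+1) (a+2*t))).Adj k (zarr (2*m) z)
          then g (((zarr (2*m) z).val : ℕ) : ZMod (2*m)) else 0)
        = (if (circ (2*m) (Finset.Icc (a+1) (a+2*t))).Adj k (zarr (2*m) z) then g z else 0) := by
    intro z; rw [zarr_val]
  rw [Finset.sum_congr rfl (fun z _ => step1 z)]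
  rw [← Finset.sum_filter]
  have hfilter : (Finset.univ.filter fun z => (circ (2*m) (Finset.Icc (a+1) (a+2*t))).Adj k (zarr (2*m) z))
      = ((Finset.Icc (a+1) (a+2*t)).image fun s : ℕ => (k.val : ZMod (2*m)) + (s : ZMod (2*m)))
        ∪ ((Finset.Icc (a+1) (a+2*t)).image fun s : ℕ => (k.val : ZMod (2*m)) - (s : ZMod (2*m))) := by
    ext z
    simp only [Finset.mem_filter, Finset.mem_univ, true_and, Finset.mem_union, Finset.mem_image]
    rw [adj_iff hat k (zarr (2*m) z)]
    constructor
    · rintro ⟨s, hs, h | h⟩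
      · exact Or.inl ⟨s, hs, by rw [← h]; exact zarr_val (2*m) z⟩
      · exact Or.inr ⟨s, hs, by rw [← h]; exact zarr_val (2*m) z⟩
    · rintro (⟨s, hs, h⟩ | ⟨s, hs, h⟩)
      · refine ⟨s, hs, Or.inl ?_⟩; simp only [zarr_val]; exact h.symm
      · refine ⟨s, hs, Or.inr ?_⟩; simp only [zarr_val]; exact h.symm
  rw [hfilter]
  have hcastinj : ∀ s ∈ Finset.Icc (a+1) (a+2*t), ∀ s' ∈ Finset.Icc (a+1) (a+2*t),
      (s : ZMod (2*m)) = (s' : ZMod (2*m)) → s = s' := by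
    intro s hs s' hs' h
    exact cast_inj_of_lt (by have := hmem s hs; omega) (by have := hmem s' hs'; omega) h
  have hdisj : Disjoint ((Finset.Icc (a+1) (a+2*t)).image fun s : ℕ => (k.val : ZMod (2*m)) + (s : ZMod (2*m)))
      ((Finset.Icc (a+1) (a+2*t)).image fun s : ℕ => (k.val : ZMod (2*m)) - (s : ZMod (2*m))) := by
    rw [Finset.disjoint_left]
    rintro z hz1 hz2
    obtain ⟨s, hs, rfl⟩ := Finset.mem_image.mp hz1
    obtain ⟨s', hs', h⟩ := Finset.mem_image.mp hz2
    have h2 : ((s + s' : ℕ) : ZMod (2*m)) = 0 := by push_cast; linear_combination -h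
    have h3 := hmem s hs; have h4 := hmem s' hs'
    exact cast_ne_zero_of (by omega) (by omega) h2
  rw [Finset.sum_union hdisj,
    Finset.sum_image (fun s hs s' hs' h => hcastinj s hs s' hs' (by
      have h2 : ((k.val : ZMod (2*m)) + (s : ZMod (2*m))) = ((k.val : ZMod (2*m)) + (s' : ZMod (2*m))) := h
      exact add_left_cancel h2)),
    Finset.sum_image (fun s hs s' hs' h => hcastinj s hs s' hs' (by
      have h2 : ((k.val : ZMod (2*m)) - (s : ZMod (2*m))) = ((k.val : ZMod (2*m)) - (s' : ZMod (2*m))) := h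
      have h3 : -(s : ZMod (2*m)) = -(s' : ZMod (2*m)) := by linear_combination h2
      exact neg_injective h3)),
    ← Finset.sum_add_distrib]

/-- Character sums over neighbourhoods. -/
lemma char_sum {R : Type*} [CommRing R] (hat : a + 2*t + 1 ≤ m)
    (c : R) (hc : c ^ (2*m) = 1) (k : Fin (2*m))
    [inst : DecidablePred ((circ (2*m) (Finset.Icc (a+1) (a+2*t))).Adj k)] :
    (∑ i, if (circ (2*m) (Finset.Icc (a+1) (a+2*t))).Adj k i then c ^ (i.val : ℕ) else 0)
      = c ^ (k.val : ℕ) * ∑ s ∈ Finset.Icc (a+1) (a+2*t), (c ^ s + c ^ (2*m - s)) := by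
  haveI : NeZero (2*m) := ⟨by omega⟩
  have hg : ∀ i : Fin (2*m), c ^ (i.val : ℕ) = (fun z : ZMod (2*m) => c ^ z.val) ((i.val : ℕ) : ZMod (2*m)) := by
    intro i; simp only [ZMod.val_cast_of_lt i.isLt]
  calc (∑ i, if (circ (2*m) (Finset.Icc (a+1) (a+2*t))).Adj k i then c ^ (i.val : ℕ) else 0)
      = (∑ i, if (circ (2*m) (Finset.Icc (a+1) (a+2*t))).Adj k i
          then (fun z : ZMod (2*m) => c ^ z.val) ((i.val : ℕ) : ZMod (2*m)) else 0) := by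
        refine Finset.sum_congr rfl fun i _ => ?_
        rw [← hg i]
    _ = ∑ s ∈ Finset.Icc (a+1) (a+2*t),
          ((fun z : ZMod (2*m) => c ^ z.val) ((k.val : ZMod (2*m)) + (s : ZMod (2*m)))
           + (fun z : ZMod (2*m) => c ^ z.val) ((k.val : ZMod (2*m)) - (s : ZMod (2*m)))) :=
        sum_adj hat (fun z : ZMod (2*m) => c ^ z.val) k
    _ = c ^ (k.val : ℕ) * ∑ s ∈ Finset.Icc (a+1) (a+2*t), (c ^ s + c ^ (2*m - s)) := by
        rw [Finset.mul_sum]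
        refine Finset.sum_congr rfl fun s hs => ?_
        obtain ⟨hs0, hsm⟩ := S_mem hat hs
        have h1 : ((k.val : ZMod (2*m)) + (s : ZMod (2*m))).val = (k.val + s) % (2*m) := by
          rw [ZMod.val_add, ZMod.val_cast_of_lt k.isLt, ZMod.val_natCast, Nat.add_mod_mod]
        have h2 : (k.val : ZMod (2*m)) - (s : ZMod (2*m))
            = (k.val : ZMod (2*m)) + ((2*m - s : ℕ) : ZMod (2*m)) := by
          rw [sub_eq_add_neg, neg_cast_eq (by omega : s ≤ 2*m)]
        have h3 : ((k.val : ZMod (2*m)) + ((2*m - s : ℕ) : ZMod (2*m))).val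
            = (k.val + (2*m - s)) % (2*m) := by
          rw [ZMod.val_add, ZMod.val_cast_of_lt k.isLt, ZMod.val_natCast, Nat.add_mod_mod]
        simp only [h1, h2, h3]
        rw [pow_mod_eq hc, pow_mod_eq hc, pow_add, pow_add, mul_add]

/-- degree of every vertex is `4t`. -/
lemma deg_circ (ht : 0 < t) (hat : a + 2*t + 1 ≤ m) (v : Fin (2*m)) :
    degOf (circ (2*m) (Finset.Icc (a+1) (a+2*t))) v = 4*t := by
  classical
  unfold degOf
  rw [Finset.card_filter]
  rw [sum_adj hat (fun _ => (1 : ℕ)) v]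
  rw [Finset.sum_const, Nat.card_Icc, smul_eq_mul]
  omega

lemma alt_Icc (R : Type*) [CommRing R] (a t : ℕ) :
    ∑ s ∈ Finset.Icc (a+1) (a+2*t), (-1 : R)^s = 0 := by
  induction t with
  | zero => simp
  | succ t ih =>
    have h1 : a + 2*(t+1) = (a + 2*t + 1) + 1 := by ring
    have h2 : a + 2*t + 1 = (a + 2*t) + 1 := by ring
    rw [h1, Finset.sum_Icc_succ_top (by omega), h2, Finset.sum_Icc_succ_top (by omega), ← h2]
    rw [show a+2*t = a + 2*t from rfl] at ih
    rw [ih]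
    have : (a + 2*t+1) + 1 = (a+2*t+1) + 1 := rfl
    rw [pow_succ]
    ring

/-- The alternating vector. -/
def altv (m : ℕ) : Fin (2*m) → ℚ := fun i => (-1 : ℚ) ^ (i.val : ℕ)

lemma neg_one_pow_sub {R : Type*} [Field R] {s n : ℕ} (hs : s ≤ n) (hn : Even n) :
    (-1 : R)^(n - s) = (-1 : R)^s := by
  have h1 : (-1 : R)^(n-s) * (-1:R)^s = 1 := by
    rw [← pow_add]
    have : n - s + s = n := by omega
    rw [this, hn.neg_one_pow]
  have h2 : (-1 : R)^s * (-1:R)^s = 1 := by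
    rw [← pow_add, Even.neg_one_pow ⟨s, by ring⟩]
  have hne : (-1 : R)^s ≠ 0 := by
    intro h; rw [h] at h2; simp at h2
  exact mul_right_cancel₀ hne (h1.trans h2.symm)

lemma kernel_alt (ht : 0 < t) (hat : a + 2*t + 1 ≤ m) :
    (adjMat (circ (2*m) (Finset.Icc (a+1) (a+2*t)))).mulVec (altv m) = 0 := by
  classical
  haveI : NeZero (2*m) := ⟨by omega⟩
  funext i
  show (∑ j, adjMat (circ (2*m) (Finset.Icc (a+1) (a+2*t))) i j * altv m j) = 0
  have hstep : ∀ j : Fin (2*m),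
      adjMat (circ (2*m) (Finset.Icc (a+1) (a+2*t))) i j * altv m j
        = (if (circ (2*m) (Finset.Icc (a+1) (a+2*t))).Adj i j then (-1:ℚ) ^ (j.val : ℕ) else 0) := by
    intro j
    simp only [adjMat, Matrix.of_apply, altv, ite_mul, one_mul, zero_mul]
  rw [Finset.sum_congr rfl fun j _ => hstep j]
  rw [char_sum hat (-1 : ℚ) (by rw [Even.neg_one_pow ⟨m, by ring⟩]) i]
  have hz : ∑ s ∈ Finset.Icc (a+1) (a+2*t), ((-1:ℚ) ^ s + (-1:ℚ) ^ (2*m - s)) = 0 := by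
    have : ∀ s ∈ Finset.Icc (a+1) (a+2*t), ((-1:ℚ)^s + (-1:ℚ)^(2*m-s)) = 2 * (-1:ℚ)^s := by
      intro s hs
      obtain ⟨hs0, hsm⟩ := S_mem hat hs
      rw [neg_one_pow_sub (by omega) ⟨m, by ring⟩]
      ring
    rw [Finset.sum_congr rfl this, ← Finset.mul_sum, alt_Icc ℚ a t, mul_zero]
  rw [hz, mul_zero]

lemma factor_key (hat : a + 2*t + 1 ≤ m) (y : ℂ) (hy : y^(2*m) = 1) :
    (y - 1) * (y^(a+2*t) * ∑ s ∈ Finset.Icc (a+1) (a+2*t), (y^s + y^(2*m - s)))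
      = (y^(2*t) - 1) * (y^(2*a+2*t+1) + 1) := by
  have hconv : Finset.Icc (a+1) (a+2*t) = Finset.Ico (a+1) (a+2*t+1) :=
    (Finset.Ico_add_one_right_eq_Icc _ _).symm
  rw [hconv, Finset.sum_Ico_eq_sum_range]
  have h2t : a + 2*t + 1 - (a+1) = 2*t := by omega
  rw [h2t, Finset.mul_sum, Finset.mul_sum]
  have key : ∀ i ∈ Finset.range (2*t),
      (y-1) * (y^(a+2*t) * (y^(a+1+i) + y^(2*m - (a+1+i))))
        = ((y^(2*a+2*t+1+(i+1)) - y^(2*a+2*t+1+i)) + (y^(2*t - i) - y^(2*t-(i+1)))) := by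
    intro i hi
    rw [Finset.mem_range] at hi
    have e1 : y^(a+2*t) * y^(a+1+i) = y^(2*a+2*t+1+i) := by rw [← pow_add]; congr 1; omega
    have e2 : y^(a+2*t) * y^(2*m - (a+1+i)) = y^(2*t-(i+1)) := by
      rw [← pow_add]
      have e3 : a+2*t + (2*m - (a+1+i)) = 2*m + (2*t - (i+1)) := by omega
      rw [e3, pow_add, hy, one_mul]
    have e6 : 2*t - i = (2*t - (i+1)) + 1 := by omega
    have e7 : 2*a+2*t+1+(i+1) = (2*a+2*t+1+i) + 1 := by omega
    rw [mul_add, e1, e2, e6, e7, pow_succ, pow_succ]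
    ring
  rw [Finset.sum_congr rfl key, Finset.sum_add_distrib,
    Finset.sum_range_sub (fun i => y^(2*a+2*t+1+i)),
    Finset.sum_range_sub' (fun i => y^(2*t - i))]
  simp only [Nat.add_zero, Nat.sub_zero, Nat.sub_self, pow_zero]
  have e9 : y^(2*a+2*t+1+2*t) = y^(2*a+2*t+1) * y^(2*t) := by rw [← pow_add]
  rw [e9]
  ring

/-- the eigenvalue associated to `j`. -/
noncomputable def lam (m t a : ℕ) (j : Fin (2*m)) : ℂ :=
  ∑ s ∈ Finset.Icc (a+1) (a+2*t),
    (((omegaC (2*m)) ^ (j.val : ℕ)) ^ s + ((omegaC (2*m)) ^ (j.val : ℕ)) ^ (2*m - s))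

lemma hprim (hm : 0 < m) : IsPrimitiveRoot (omegaC (2*m)) (2*m) := by
  unfold omegaC
  exact Complex.isPrimitiveRoot_exp (2*m) (by omega)

lemma om_pow (hm : 0 < m) : (omegaC (2*m)) ^ (2*m) = 1 := (hprim hm).pow_eq_one

lemma om_m (hm : 0 < m) : (omegaC (2*m)) ^ m = -1 := by
  have h2 : ((omegaC (2*m)) ^ m) ^ 2 = 1 := by
    rw [← pow_mul]
    have : m * 2 = 2 * m := by ring
    rw [this, om_pow hm]
  have hne : (omegaC (2*m)) ^ m ≠ 1 :=
    (hprim hm).pow_ne_one_of_pos_of_lt (by omega) (by omega)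
  have hms : (omegaC (2*m)) ^ m * (omegaC (2*m)) ^ m = 1 := by rw [← sq]; exact h2
  have := mul_self_eq_one_iff.mp hms
  tauto

lemma lam_ne (ht : 0 < t) (hm : 0 < m) (hat : a + 2*t + 1 ≤ m)
    (hgt : Nat.gcd t m = 1) (hu : Nat.gcd (2*a+2*t+1) m = 1)
    (j : Fin (2*m)) (hj : (j.val : ℕ) ≠ m) : lam m t a j ≠ 0 := by
  set ω := omegaC (2*m) with hω
  set y := ω ^ (j.val : ℕ) with hydef
  have hyn : y ^ (2*m) = 1 := by
    rw [hydef, ← pow_mul, mul_comm (j.val : ℕ) (2*m), pow_mul, om_pow hm, one_pow]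
  by_cases hj0 : (j.val : ℕ) = 0
  · -- y = 1, lam = 4t
    have hy1 : y = 1 := by rw [hydef, hj0, pow_zero]
    intro hlam
    unfold lam at hlam
    rw [← hydef] at hlam
    rw [hy1] at hlam
    simp only [one_pow] at hlam
    rw [Finset.sum_const, Nat.card_Icc] at hlam
    have hc : ((a + 2*t + 1 - (a+1)) : ℕ) = 2*t := by omega
    rw [hc, nsmul_eq_mul] at hlam
    rcases mul_eq_zero.mp hlam with h | h
    · have : (2*t : ℕ) = 0 := by exact_mod_cast h
      omega
    · norm_num at h
  · -- y ≠ 1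
    have hy1 : y ≠ 1 := (hprim hm).pow_ne_one_of_pos_of_lt (by omega) j.isLt
    intro hlam
    have hfac := factor_key (m := m) (t := t) (a := a) hat y hyn
    unfold lam at hlam
    rw [← hydef] at hlam
    rw [hlam, mul_zero, mul_zero] at hfac
    -- y = -1 leads to j.val = m
    have hyneg : y ≠ -1 := by
      intro hcon
      apply hj
      have hm2 : ω ^ m = -1 := om_m hm
      have : ω ^ (j.val : ℕ) = ω ^ m := by rw [← hydef, hcon, hm2]
      exact (hprim hm).pow_inj j.isLt (by omega) this
    have hy2 : y ^ 2 ≠ 1 := by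
      intro hcon
      have hms : y * y = 1 := by rw [← sq]; exact hcon
      rcases mul_self_eq_one_iff.mp hms with h | h
      · exact hy1 h
      · exact hyneg h
    rcases mul_eq_zero.mp hfac.symm with h | h
    · -- y ^ (2t) = 1
      have h2t : y ^ (2*t) = 1 := by linear_combination h
      have hd1 : orderOf y ∣ 2*t := orderOf_dvd_iff_pow_eq_one.mpr h2t
      have hd2 : orderOf y ∣ 2*m := orderOf_dvd_iff_pow_eq_one.mpr hyn
      have hd : orderOf y ∣ Nat.gcd (2*t) (2*m) := Nat.dvd_gcd hd1 hd2
      rw [Nat.gcd_mul_left, hgt, mul_one] at hd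
      exact hy2 (orderOf_dvd_iff_pow_eq_one.mp hd)
    · -- y ^ u = -1
      have hneg : y ^ (2*a+2*t+1) = -1 := by linear_combination h
      have h2u : y ^ (2*(2*a+2*t+1)) = 1 := by
        rw [mul_comm, pow_mul, hneg]; norm_num
      have hd1 : orderOf y ∣ 2*(2*a+2*t+1) := orderOf_dvd_iff_pow_eq_one.mpr h2u
      have hd2 : orderOf y ∣ 2*m := orderOf_dvd_iff_pow_eq_one.mpr hyn
      have hd : orderOf y ∣ Nat.gcd (2*(2*a+2*t+1)) (2*m) := Nat.dvd_gcd hd1 hd2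
      rw [Nat.gcd_mul_left, hu, mul_one] at hd
      exact hy2 (orderOf_dvd_iff_pow_eq_one.mp hd)

lemma kernel_unique (ht : 0 < t) (hm : 0 < m) (hat : a + 2*t + 1 ≤ m)
    (hgt : Nat.gcd t m = 1) (hu : Nat.gcd (2*a+2*t+1) m = 1)
    (w : Fin (2*m) → ℚ)
    (hw : (adjMat (circ (2*m) (Finset.Icc (a+1) (a+2*t)))).mulVec w = 0) :
    ∃ c : ℚ, w = c • altv m := by
  classical
  haveI : NeZero (2*m) := ⟨by omega⟩
  set ω := omegaC (2*m) with hωdef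
  have hω1 : ω ^ (2*m) = 1 := om_pow hm
  have hωne : ω ≠ 0 := by
    intro h
    rw [h, zero_pow (by omega : 2*m ≠ 0)] at hω1
    exact zero_ne_one hω1
  set G := circ (2*m) (Finset.Icc (a+1) (a+2*t)) with hG
  set chat : Fin (2*m) → ℂ :=
    fun j => ∑ k, ((w k : ℂ) * (ω ^ (j.val : ℕ)) ^ (k.val : ℕ)) with hchat
  -- Step 1 : the Fourier coefficients are annihilated by the eigenvalues
  have step1 : ∀ j : Fin (2*m), chat j * lam m t a j = 0 := by
    intro j
    have hcj : (ω ^ (j.val:ℕ)) ^ (2*m) = 1 := by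
      rw [← pow_mul, mul_comm (j.val:ℕ) (2*m), pow_mul, hω1, one_pow]
    have hz : ∀ i : Fin (2*m), (adjMat G).mulVec w i = 0 := fun i => congrFun hw i
    have T : (∑ i, (((adjMat G).mulVec w i : ℚ) : ℂ) * (ω ^ (j.val:ℕ)) ^ (i.val:ℕ)) = 0 := by
      apply Finset.sum_eq_zero
      intro i _
      rw [hz i]
      push_cast
      ring
    have hentry : ∀ i k1 : Fin (2*m),
        ((adjMat G i k1 * w k1 : ℚ) : ℂ) = (if G.Adj i k1 then ((w k1 : ℚ) : ℂ) else 0) := by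
      intro i k1
      simp only [hG, adjMat, Matrix.of_apply]
      split_ifs <;> push_cast <;> ring
    have expand : (∑ i, (((adjMat G).mulVec w i : ℚ) : ℂ) * (ω ^ (j.val:ℕ)) ^ (i.val:ℕ))
        = chat j * lam m t a j := by
      have hmv : ∀ i, ((adjMat G).mulVec w i : ℚ) = ∑ k1, adjMat G i k1 * w k1 := fun i => rfl
      calc (∑ i, (((adjMat G).mulVec w i : ℚ) : ℂ) * (ω ^ (j.val:ℕ)) ^ (i.val:ℕ))
          = ∑ i, (∑ k1, (if G.Adj i k1 then ((w k1 : ℚ) : ℂ) else 0)) * (ω ^ (j.val:ℕ)) ^ (i.val:ℕ) := by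
            refine Finset.sum_congr rfl fun i _ => ?_
            rw [hmv i]
            push_cast
            congr 1
            refine Finset.sum_congr rfl fun k1 _ => ?_
            rw [← hentry i k1]
            push_cast
            ring
        _ = ∑ i, ∑ k1, (if G.Adj i k1 then ((w k1 : ℚ) : ℂ) else 0) * (ω ^ (j.val:ℕ)) ^ (i.val:ℕ) := by
            refine Finset.sum_congr rfl fun i _ => ?_
            rw [Finset.sum_mul]
        _ = ∑ k1, ∑ i, (if G.Adj i k1 then ((w k1 : ℚ) : ℂ) else 0) * (ω ^ (j.val:ℕ)) ^ (i.val:ℕ) :=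
            Finset.sum_comm
        _ = ∑ k1, (w k1 : ℂ) * ((ω ^ (j.val:ℕ)) ^ (k1.val:ℕ) * lam m t a j) := by
            refine Finset.sum_congr rfl fun k1 _ => ?_
            have hper : ∀ i : Fin (2*m),
                (if G.Adj i k1 then ((w k1 : ℚ) : ℂ) else 0) * (ω ^ (j.val:ℕ)) ^ (i.val:ℕ)
                  = (w k1 : ℂ) * (if G.Adj k1 i then (ω ^ (j.val:ℕ)) ^ (i.val:ℕ) else 0) := by
              intro i
              rw [if_congr (G.adj_comm i k1) rfl rfl]
              split_ifs <;> ring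
            rw [Finset.sum_congr rfl fun i _ => hper i, ← Finset.mul_sum]
            congr 1
            rw [hG]
            rw [char_sum hat (ω ^ (j.val:ℕ)) hcj k1]
            rfl
        _ = chat j * lam m t a j := by
            rw [hchat, Finset.sum_mul]
            refine Finset.sum_congr rfl fun k1 _ => ?_
            ring
    rw [← expand]
    exact T
  -- Step 2 : coefficients vanish away from m
  have step2 : ∀ j : Fin (2*m), (j.val : ℕ) ≠ m → chat j = 0 := by
    intro j hj
    rcases mul_eq_zero.mp (step1 j) with h | h
    · exact h
    · exact absurd h (lam_ne ht hm hat hgt hu j hj)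
  set jm : Fin (2*m) := ⟨m, by omega⟩ with hjm
  -- Step 3 : inversion
  have step3 : ∀ k : Fin (2*m), (w k : ℂ) * (2*m : ℂ) = chat jm * (-1 : ℂ) ^ (k.val : ℕ) := by
    intro k
    have hker : (ω ^ (k.val:ℕ)) ≠ 0 := pow_ne_zero _ hωne
    have hA : (∑ j : Fin (2*m), chat j * ((ω ^ (k.val:ℕ))⁻¹) ^ (j.val:ℕ))
        = chat jm * ((ω ^ (k.val:ℕ))⁻¹) ^ m := by
      rw [Finset.sum_eq_single jm]
      · intro j _ hne
        have : (j.val : ℕ) ≠ m := by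
          intro h; exact hne (Fin.ext h)
        rw [step2 j this, zero_mul]
      · intro h; exact absurd (Finset.mem_univ jm) h
    have hB : (∑ j : Fin (2*m), chat j * ((ω ^ (k.val:ℕ))⁻¹) ^ (j.val:ℕ))
        = (w k : ℂ) * (2*m : ℂ) := by
      have hinner : ∀ l : Fin (2*m),
          (∑ j : Fin (2*m), ((ω ^ (l.val:ℕ)) * (ω ^ (k.val:ℕ))⁻¹) ^ (j.val:ℕ))
            = if l = k then ((2*m : ℕ) : ℂ) else 0 := by
        intro l
        set z : ℂ := (ω ^ (l.val:ℕ)) * (ω ^ (k.val:ℕ))⁻¹ with hzdef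
        have hsum : (∑ j : Fin (2*m), z ^ (j.val:ℕ)) = ∑ j ∈ Finset.range (2*m), z ^ j :=
          Fin.sum_univ_eq_sum_range (fun i => z ^ i) (2*m)
        by_cases hlk : l = k
        · subst hlk
          have hz1 : z = 1 := mul_inv_cancel₀ hker
          rw [hsum, hz1]
          simp
        · have hz1 : z ≠ 1 := by
            intro hcon
            apply hlk
            have : ω ^ (l.val:ℕ) = ω ^ (k.val:ℕ) := (mul_inv_eq_one₀ hker).mp hcon
            exact Fin.ext ((hprim hm).pow_inj l.isLt k.isLt this)
          have hzn : z ^ (2*m) = 1 := by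
            have e1 : (ω ^ (l.val:ℕ))^(2*m) = 1 := by
              rw [← pow_mul, mul_comm (l.val:ℕ) (2*m), pow_mul, hω1, one_pow]
            have e2 : (ω ^ (k.val:ℕ))^(2*m) = 1 := by
              rw [← pow_mul, mul_comm (k.val:ℕ) (2*m), pow_mul, hω1, one_pow]
            rw [hzdef, mul_pow, inv_pow, e1, e2, inv_one, mul_one]
          rw [hsum, geom_sum_eq hz1, hzn, sub_self, zero_div, if_neg hlk]
      calc (∑ j : Fin (2*m), chat j * ((ω ^ (k.val:ℕ))⁻¹) ^ (j.val:ℕ))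
          = ∑ j : Fin (2*m), ∑ l, (w l : ℂ) * ((ω ^ (l.val:ℕ)) * (ω ^ (k.val:ℕ))⁻¹) ^ (j.val:ℕ) := by
            refine Finset.sum_congr rfl fun j _ => ?_
            rw [hchat, Finset.sum_mul]
            refine Finset.sum_congr rfl fun l _ => ?_
            rw [mul_pow, mul_assoc]
            congr 2
            rw [← pow_mul, ← pow_mul, mul_comm (j.val:ℕ) (l.val:ℕ)]
        _ = ∑ l, ∑ j : Fin (2*m), (w l : ℂ) * ((ω ^ (l.val:ℕ)) * (ω ^ (k.val:ℕ))⁻¹) ^ (j.val:ℕ) :=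
            Finset.sum_comm
        _ = ∑ l, (w l : ℂ) * (if l = k then ((2*m:ℕ) : ℂ) else 0) := by
            refine Finset.sum_congr rfl fun l _ => ?_
            rw [← Finset.mul_sum, hinner l]
        _ = (w k : ℂ) * (2*m : ℂ) := by
            rw [Finset.sum_eq_single k]
            · rw [if_pos rfl]
              push_cast
              ring
            · intro l _ hne
              rw [if_neg hne, mul_zero]
            · intro h; exact absurd (Finset.mem_univ k) h
    have hinvm : ((ω ^ (k.val:ℕ))⁻¹) ^ m = (-1 : ℂ) ^ (k.val : ℕ) := by
      rw [inv_pow, ← pow_mul, mul_comm (k.val:ℕ) m, pow_mul, om_m hm]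
      exact inv_eq_of_mul_eq_one_right (by rw [← pow_add]; exact Even.neg_one_pow ⟨(k.val:ℕ), by ring⟩)
    rw [← hB, hA, hinvm]
  -- Step 4 : conclude
  set k0 : Fin (2*m) := ⟨0, by omega⟩ with hk0
  have hchat0 : chat jm = (w k0 : ℂ) * (2*m : ℂ) := by
    have := step3 k0
    simp only [hk0] at this
    rw [this]
    norm_num
  refine ⟨w k0, funext fun k => ?_⟩
  have hC : (w k : ℂ) = (w k0 : ℂ) * (-1 : ℂ) ^ (k.val : ℕ) := by
    have h1 := step3 k
    rw [hchat0] at h1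
    have h2m : (2*m : ℂ) ≠ 0 := by
      have : ((2*m : ℕ) : ℂ) ≠ 0 := Nat.cast_ne_zero.mpr (by omega)
      push_cast at this
      exact this
    have h3 : (w k : ℂ) * (2*m : ℂ) = ((w k0 : ℂ) * (-1:ℂ)^(k.val:ℕ)) * (2*m : ℂ) := by
      linear_combination h1
    exact mul_right_cancel₀ h2m h3
  have hQ : w k = w k0 * (-1 : ℚ) ^ (k.val : ℕ) := by
    exact_mod_cast hC
  have hR : (w k0 • altv m) k = w k0 * (-1:ℚ)^(k.val:ℕ) := by
    simp [altv]
  rw [hQ, hR]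

lemma nut_main (ht : 0 < t) (hm : 0 < m) (hat : a + 2*t + 1 ≤ m)
    (hgt : Nat.gcd t m = 1) (hu : Nat.gcd (2*a+2*t+1) m = 1) :
    IsNutGraph (circ (2*m) (Finset.Icc (a+1) (a+2*t))) := by
  refine ⟨by omega, altv m, ?_, kernel_alt ht hat,
    fun w hw => kernel_unique ht hm hat hgt hu w hw⟩
  intro i
  exact pow_ne_zero _ (by norm_num)

end Main
end Nut13


/-- For a positive integer `t` and an even `n ≥ 4t + 4` with
`gcd(n/2, t) = 1`, there exists `S ⊆ {1,…,n/2−1}` such that `Circ(n, S)` is a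
`4t`-regular nut graph. -/
theorem exists_4t_regular_circulant_nut
    (t : ℕ) (ht : 0 < t) (n : ℕ) (hn : 4 * t + 4 ≤ n) (hneven : Even n)
    (hgcd : Nat.gcd (n / 2) t = 1) :
    ∃ S : Finset ℕ, S ⊆ Finset.Icc 1 (n / 2 - 1) ∧
      IsNutGraph (circ n S) ∧ IsRegularGraph (circ n S) (4 * t) := by
  obtain ⟨m, rfl⟩ : ∃ m, n = 2*m := by
    rcases hneven with ⟨r, hr⟩; exact ⟨r, by omega⟩
  have hm2 : (2*m) / 2 = m := by omega
  rw [hm2] at hgcd ⊢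
  have hgt : Nat.gcd t m = 1 := Nat.gcd_comm m t ▸ hgcd
  have hmbig : 2*t + 2 ≤ m := by omega
  have hm0 : 0 < m := by omega
  -- choose `a` according to the parity of `m`
  obtain ⟨a, hat, hu⟩ : ∃ a : ℕ, a + 2*t + 1 ≤ m ∧ Nat.gcd (2*a+2*t+1) m = 1 := by
    rcases Nat.even_or_odd m with he | ho
    · obtain ⟨b, hb⟩ := he
      refine ⟨b - t - 1, by omega, ?_⟩
      obtain ⟨k, hk⟩ : ∃ k, m = k + 1 := ⟨m - 1, by omega⟩
      have huv : 2*(b-t-1)+2*t+1 = k := by omega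
      rw [huv, hk, Nat.gcd_comm, Nat.gcd_self_add_left k 1]
      exact Nat.gcd_one_left _
    · have hmo : 2*t + 3 ≤ m := by
        rcases ho with ⟨c, hc⟩; omega
      obtain ⟨c, hc⟩ := ho
      refine ⟨c + 1 - t, by omega, ?_⟩
      have huv : 2*(c+1-t)+2*t+1 = 2 + m := by omega
      rw [huv, Nat.gcd_add_self_left m 2]
      exact Nat.coprime_two_left.mpr ⟨c, hc⟩
  refine ⟨Finset.Icc (a+1) (a+2*t), Finset.Icc_subset_Icc (by omega) (by omega),
    Nut13.nut_main ht hm0 hat hgt hu, fun v => Nut13.deg_circ ht hat v⟩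
end
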